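/- arXiv:1003.5786 — 2 statements merged into one kernel-verified Lean document; each statement's English description precedes it below -/
import Mathlib

section
/- Let x ∈ S¹ and 0 < t ≤ 1/2. Let Jᵐ ∈ 𝓘ᵐ and Iⁿ ∈ 𝓘ⁿ be largest subdivision intervals contained in [x−t,x] and [x,x+t] respectively, i.e., |Jᵐ| = δ([x−t,x]) and |Iⁿ| = δ([x,x+t]). Then |m − n| ≤ 4. -/
open Metric Set

noncomputable section

abbrev S1 := AddCircle (1 : ℝ)

/-- The arc of the unit circle corresponding to the parameter interval `[u, v]`. -/
def carc (u v : ℝ) : Set S1 :=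
  (fun t : ℝ => (t : S1)) '' Set.Icc u v

/-- The relative length of the `i`-th subinterval in the dyadic division of an interval
into `N` subintervals: `1/4, 1/8, …` symmetrically from both endpoints. -/
def dyadicLen (N i : ℕ) : ℝ :=
  if N % 2 = 0 then
    (2 : ℝ) ^ (-(min (min i (N - 1 - i) + 2) (N / 2) : ℤ))
  else
    (if min i (N - 1 - i) + 3 ≤ (N + 1) / 2 then
      (2 : ℝ) ^ (-(min i (N - 1 - i) + 2 : ℤ))
    else if min i (N - 1 - i) + 2 = (N + 1) / 2 then
      (2 : ℝ) ^ (-((N + 1) / 2 : ℤ))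
    else
      (2 : ℝ) ^ (-(((N + 1) / 2 : ℤ) - 1)))

/-- The nested subdivisions `𝓘ⁿ` of the unit circle `S¹ = [0,1]/{0∼1}` constructed via the
dyadic length pattern.  Generation `n` consists of the intervals
`Iⁿⱼ = [p n j, p n (j+1)]`, `j < N n`, with `0` a common subdivision point. -/
structure DyadicSubdivisions where
  /-- number of intervals of generation `n` -/
  N : ℕ → ℕ
  /-- subdivision points of generation `n` -/
  p : ℕ → ℕ → ℝ
  four_le : ∀ n, 4 ≤ N n
  zero : ∀ n, p n 0 = 0
  last : ∀ n, p n (N n) = 1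
  mono : ∀ n, ∀ j < N n, p n j < p n (j + 1)
  /-- `𝓘ⁿ⁺¹` subdivides `𝓘ⁿ`: every point of generation `n` is one of generation `n+1` -/
  nested : ∀ n, ∀ i ≤ N n, ∃ j ≤ N (n + 1), p (n + 1) j = p n i
  /-- a child interval has length at most a quarter of its parent -/
  quarter : ∀ n, ∀ j < N (n + 1), ∀ i < N n,
    Set.Icc (p (n + 1) j) (p (n + 1) (j + 1)) ⊆ Set.Icc (p n i) (p n (i + 1)) →
    p (n + 1) (j + 1) - p (n + 1) j ≤ (p n (i + 1) - p n i) / 4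
  /-- adjacent intervals of the same generation have length ratio in `{1/2, 1, 2}` -/
  adjacent : ∀ n, ∀ j, j + 1 < N n →
    (p n (j + 2) - p n (j + 1)) / (p n (j + 1) - p n j) ∈ ({1 / 2, 1, 2} : Set ℝ)
  adjacent_wrap : ∀ n,
    (p n 1 - p n 0) / (p n (N n) - p n (N n - 1)) ∈ ({1 / 2, 1, 2} : Set ℝ)
  /-- each interval is divided into its children following the dyadic pattern -/
  dyadic : ∀ n, ∀ i < N n, ∃ k K, 4 ≤ K ∧ k + K ≤ N (n + 1) ∧
    p (n + 1) k = p n i ∧ p (n + 1) (k + K) = p n (i + 1) ∧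
    ∀ l < K, p (n + 1) (k + l + 1) - p (n + 1) (k + l) =
      dyadicLen K l * (p n (i + 1) - p n i)

/-- The subdivision interval `Iⁿⱼ` is contained in the circle interval `[a, b]`
(containment modulo the identification `0 ∼ 1`). -/
def ContainedIn (D : DyadicSubdivisions) (n j : ℕ) (a b : ℝ) : Prop :=
  j < D.N n ∧ ∃ m : ℤ, a ≤ D.p n j + m ∧ D.p n (j + 1) + m ≤ b

/-- `δ([a,b])`: the maximal length of a subdivision interval contained in `[a,b]`. -/
def deltaMax (D : DyadicSubdivisions) (a b : ℝ) : ℝ :=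
  sSup {d : ℝ | ∃ n j, ContainedIn D n j a b ∧ d = D.p n (j + 1) - D.p n j}


namespace DyadicSubdivisions

variable (D : DyadicSubdivisions)

lemma N_pos (n : ℕ) : 0 < D.N n := lt_of_lt_of_le (by norm_num) (D.four_le n)

lemma p_lt_p (n : ℕ) {i j : ℕ} (hij : i < j) (hj : j ≤ D.N n) : D.p n i < D.p n j := by
  induction j with
  | zero => omega
  | succ j ih =>
    rcases Nat.lt_or_ge i j with h | h
    · exact lt_trans (ih h (by omega)) (D.mono n j (by omega))
    · have : i = j := by omega
      subst this
      exact D.mono n i (by omega)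

lemma p_le_p (n : ℕ) {i j : ℕ} (hij : i ≤ j) (hj : j ≤ D.N n) : D.p n i ≤ D.p n j := by
  rcases Nat.lt_or_ge i j with h | h
  · exact le_of_lt (D.p_lt_p n h hj)
  · have : i = j := by omega
    subst this; rfl

lemma p_nonneg (n : ℕ) {i : ℕ} (hi : i ≤ D.N n) : 0 ≤ D.p n i := by
  have := D.p_le_p n (Nat.zero_le i) hi
  rwa [D.zero] at this

lemma p_le_one (n : ℕ) {i : ℕ} (hi : i ≤ D.N n) : D.p n i ≤ 1 := by
  have := D.p_le_p n hi le_rfl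
  rwa [D.last] at this

/-- `ℤ`-indexed subdivision points of generation `n`, extended `1`-periodically. -/
def P (n : ℕ) (k : ℤ) : ℝ := D.p n (k % (D.N n : ℤ)).toNat + ((k / (D.N n : ℤ) : ℤ) : ℝ)

lemma emod_lt (n : ℕ) (k : ℤ) : (k % (D.N n : ℤ)).toNat < D.N n := by
  have h1 : (0:ℤ) < (D.N n : ℤ) := by exact_mod_cast D.N_pos n
  have h2 := Int.emod_lt_of_pos k h1
  have h3 := Int.emod_nonneg k (ne_of_gt h1)
  omega

/-- Normal form of `P n (k+1)`. -/
lemma P_succ (n : ℕ) (k : ℤ) :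
    D.P n (k + 1) = D.p n ((k % (D.N n : ℤ)).toNat + 1) + ((k / (D.N n : ℤ) : ℤ) : ℝ) := by
  have h1 : (0:ℤ) < (D.N n : ℤ) := by exact_mod_cast D.N_pos n
  have h3 := Int.emod_nonneg k (ne_of_gt h1)
  have h2 := Int.emod_lt_of_pos k h1
  have hk := Int.mul_ediv_add_emod k (D.N n : ℤ)
  have hk1 := Int.mul_ediv_add_emod (k+1) (D.N n : ℤ)
  have h31 := Int.emod_nonneg (k+1) (ne_of_gt h1)
  have h21 := Int.emod_lt_of_pos (k+1) h1
  have h4 : (4:ℤ) ≤ (D.N n : ℤ) := by exact_mod_cast D.four_le n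
  rcases lt_or_eq_of_le (by omega : k % (D.N n : ℤ) + 1 ≤ (D.N n : ℤ)) with h | h
  · -- no wrap
    have e1 : (k + 1) % (D.N n : ℤ) = k % (D.N n : ℤ) + 1 := by
      rw [Int.add_emod, Int.emod_eq_of_lt (by omega : (0:ℤ) ≤ 1) (by omega)]
      exact Int.emod_eq_of_lt (by omega) (by omega)
    have e2 : (k + 1) / (D.N n : ℤ) = k / (D.N n : ℤ) := by
      have : (D.N n : ℤ) * ((k+1) / (D.N n : ℤ)) = (D.N n : ℤ) * (k / (D.N n : ℤ)) := by omega
      exact mul_left_cancel₀ (ne_of_gt h1) this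
    rw [P, e1, e2]
    congr 2
    omega
  · -- wrap: k % N = N - 1
    have e1 : (k + 1) % (D.N n : ℤ) = 0 := by
      rw [Int.add_emod, Int.emod_eq_of_lt (by omega : (0:ℤ) ≤ 1) (by omega), h]
      simp
    have e2 : (k + 1) / (D.N n : ℤ) = k / (D.N n : ℤ) + 1 := by
      have : (D.N n : ℤ) * ((k+1) / (D.N n : ℤ)) = (D.N n : ℤ) * (k / (D.N n : ℤ) + 1) := by
        rw [mul_add]; omega
      exact mul_left_cancel₀ (ne_of_gt h1) this
    have e3 : (k % (D.N n : ℤ)).toNat + 1 = D.N n := by omega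
    rw [P, e1, e2, e3, D.last]
    have : (Int.toNat 0) = 0 := rfl
    rw [this, D.zero]
    push_cast
    ring

lemma P_lt_succ (n : ℕ) (k : ℤ) : D.P n k < D.P n (k + 1) := by
  rw [P, P_succ]
  have := D.mono n _ (D.emod_lt n k)
  linarith

lemma P_strictMono (n : ℕ) : StrictMono (D.P n) :=
  strictMono_int_of_lt_succ (D.P_lt_succ n)

lemma P_add_nat (n : ℕ) (k : ℤ) : D.P n (k + (D.N n : ℤ)) = D.P n k + 1 := by
  have h1 : (0:ℤ) < (D.N n : ℤ) := by exact_mod_cast D.N_pos n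
  have e0 : k + (D.N n : ℤ) = k + (D.N n : ℤ) * 1 := by ring
  rw [P, P, e0, Int.add_mul_emod_self_left, Int.add_mul_ediv_left _ 1 (ne_of_gt h1)]
  push_cast
  ring

lemma P_mul (n : ℕ) (q : ℤ) : D.P n ((D.N n : ℤ) * q) = q := by
  have h1 : (0:ℤ) < (D.N n : ℤ) := by exact_mod_cast D.N_pos n
  rw [P, Int.mul_emod_right, Int.mul_ediv_cancel_left _ (ne_of_gt h1)]
  have : (Int.toNat 0) = 0 := rfl
  rw [this, D.zero]
  simp

end DyadicSubdivisions

namespace DyadicSubdivisions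

variable (D : DyadicSubdivisions)

lemma P_len_pos (n : ℕ) (k : ℤ) : 0 < D.P n (k + 1) - D.P n k :=
  sub_pos.mpr (D.P_lt_succ n k)

lemma P_len_le_one (n : ℕ) (k : ℤ) : D.P n (k + 1) - D.P n k ≤ 1 := by
  rw [P_succ, P]
  have h1 := D.p_nonneg n (le_of_lt (D.emod_lt n k))
  have h2 := D.p_le_one n (by have := D.emod_lt n k; omega : (k % (D.N n : ℤ)).toNat + 1 ≤ D.N n)
  linarith

/-- Every generation-`n` point is a generation-`n+1` point. -/
lemma nested_P (n : ℕ) (k : ℤ) : ∃ k' : ℤ, D.P (n + 1) k' = D.P n k := by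
  obtain ⟨j, hj, hpj⟩ := D.nested n (k % (D.N n : ℤ)).toNat (le_of_lt (D.emod_lt n k))
  have hjlt : j < D.N (n + 1) := by
    rcases lt_or_eq_of_le hj with h | h
    · exact h
    · exfalso
      rw [h, D.last] at hpj
      have := D.p_lt_p n (D.emod_lt n k) le_rfl
      rw [D.last] at this
      linarith
  refine ⟨(j : ℤ) + (D.N (n+1) : ℤ) * (k / (D.N n : ℤ)), ?_⟩
  rw [P, P]
  have e1 : ((j:ℤ) + (D.N (n+1) : ℤ) * (k / (D.N n : ℤ))) % (D.N (n+1) : ℤ) = j := by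
    rw [Int.add_mul_emod_self_left]
    exact Int.emod_eq_of_lt (by positivity) (by exact_mod_cast hjlt)
  have e2 : ((j:ℤ) + (D.N (n+1) : ℤ) * (k / (D.N n : ℤ))) / (D.N (n+1) : ℤ) = k / (D.N n : ℤ) := by
    have hN : ((D.N (n+1) : ℤ)) ≠ 0 := by
      have := D.N_pos (n+1); positivity
    rw [Int.add_mul_ediv_left _ _ hN, Int.ediv_eq_zero_of_lt (by positivity) (by exact_mod_cast hjlt)]
    ring
  rw [e1, e2]
  simp [hpj]

/-- discrete intermediate value: locating a real within a generation. -/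
lemma locate_aux (n : ℕ) (a : ℝ) : ∀ (d : ℕ) (k₀ : ℤ), D.P n k₀ ≤ a → a < D.P n (k₀ + d) →
    ∃ k : ℤ, D.P n k ≤ a ∧ a < D.P n (k + 1) := by
  intro d
  induction d with
  | zero => intro k₀ h1 h2; norm_num at h2; exact absurd h2 (not_lt.mpr h1)
  | succ d ih =>
    intro k₀ h1 h2
    rcases lt_or_ge a (D.P n (k₀ + d)) with h | h
    · exact ih k₀ h1 h
    · refine ⟨k₀ + d, h, ?_⟩
      have : (k₀ : ℤ) + (d + 1 : ℕ) = k₀ + d + 1 := by push_cast; ring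
      rwa [this] at h2

lemma locate (n : ℕ) (a : ℝ) : ∃ k : ℤ, D.P n k ≤ a ∧ a < D.P n (k + 1) := by
  have h1 : D.P n ((D.N n : ℤ) * ⌊a⌋) = ⌊a⌋ := D.P_mul n ⌊a⌋
  have h2 : D.P n ((D.N n : ℤ) * (⌊a⌋ + 1)) = (⌊a⌋ : ℝ) + 1 := by
    rw [D.P_mul n (⌊a⌋+1)]; push_cast; ring
  apply D.locate_aux n a (D.N n) ((D.N n : ℤ) * ⌊a⌋)
  · rw [h1]; exact Int.floor_le a
  · have e : (D.N n : ℤ) * ⌊a⌋ + (D.N n : ℕ) = (D.N n : ℤ) * (⌊a⌋ + 1) := by push_cast; ring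
    rw [e, h2]
    exact lt_of_lt_of_le (Int.lt_floor_add_one a) (by linarith)

/-- Each generation-`n+1` interval has a generation-`n` parent, of at least 4× length. -/
lemma parent (n : ℕ) (k : ℤ) : ∃ k' : ℤ, D.P n k' ≤ D.P (n+1) k ∧
    D.P (n+1) (k+1) ≤ D.P n (k'+1) ∧
    D.P (n+1) (k+1) - D.P (n+1) k ≤ (D.P n (k'+1) - D.P n k') / 4 := by
  obtain ⟨k', h1, h2⟩ := D.locate n (D.P (n+1) k)
  obtain ⟨k'', hk''⟩ := D.nested_P n (k'+1)
  have hlt : D.P (n+1) k < D.P (n+1) k'' := by rw [hk'']; exact h2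
  have hkk : k < k'' := (D.P_strictMono (n+1)).lt_iff_lt.mp hlt
  have h3 : D.P (n+1) (k+1) ≤ D.P n (k'+1) := by
    rw [← hk'']
    exact (D.P_strictMono (n+1)).monotone (by omega)
  refine ⟨k', h1, h3, ?_⟩
  -- transfer to the quarter axiom
  set j := (k % (D.N (n+1) : ℤ)).toNat with hj
  set i := (k' % (D.N n : ℤ)).toNat with hi
  have hjlt := D.emod_lt (n+1) k
  have hilt := D.emod_lt n k'
  have hP1 : D.P (n+1) k = D.p (n+1) j + ((k / (D.N (n+1) : ℤ) : ℤ) : ℝ) := rfl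
  have hP2 := D.P_succ (n+1) k
  have hP3 : D.P n k' = D.p n i + ((k' / (D.N n : ℤ) : ℤ) : ℝ) := rfl
  have hP4 := D.P_succ n k'
  set s : ℤ := k / (D.N (n+1) : ℤ)
  set s' : ℤ := k' / (D.N n : ℤ)
  have hb1 := D.p_nonneg (n+1) (le_of_lt hjlt)
  have hb2 := D.p_le_one (n+1) (by omega : j + 1 ≤ D.N (n+1))
  have hb3 := D.p_nonneg n (le_of_lt hilt)
  have hb4 := D.p_le_one n (by omega : i + 1 ≤ D.N n)
  have hb1' := D.p_le_one (n+1) (le_of_lt hjlt)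
  have hb3' := D.p_le_one n (le_of_lt hilt)
  have hb2' := D.p_nonneg (n+1) (by omega : j + 1 ≤ D.N (n+1))
  have hb4' := D.p_nonneg n (by omega : i + 1 ≤ D.N n)
  have hjN : D.p (n+1) j < 1 := by
    have := D.p_lt_p (n+1) hjlt le_rfl; rwa [D.last] at this
  have hi1 : 0 < D.p n (i+1) := by
    have := D.p_lt_p n (by omega : 0 < i+1) (by omega); rwa [D.zero] at this
  -- the shift difference must vanish
  have key1 : D.p n i + (s' - s : ℤ) ≤ D.p (n+1) j := by
    have : D.p n i + s' ≤ D.p (n+1) j + s := by rw [← hP3, ← hP1] at *; linarith [h1]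
    push_cast; push_cast at this; linarith
  have key2 : D.p (n+1) (j+1) ≤ D.p n (i+1) + (s' - s : ℤ) := by
    have : D.p (n+1) (j+1) + s ≤ D.p n (i+1) + s' := by
      rw [hP2, hP4] at h3; push_cast at h3 ⊢; linarith
    push_cast; push_cast at this; linarith
  have hj1 : 0 < D.p (n+1) (j+1) := by
    have := D.p_lt_p (n+1) (by omega : 0 < j+1) (by omega : j+1 ≤ D.N (n+1))
    rwa [D.zero] at this
  have hσ : (s' - s : ℤ) = 0 := by
    have l1 : ((s' - s : ℤ) : ℝ) < 1 := by linarith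
    have l2 : (-1 : ℝ) < ((s' - s : ℤ) : ℝ) := by linarith
    have l1' : (s' - s : ℤ) < 1 := by exact_mod_cast l1
    have l2' : (-1 : ℤ) < (s' - s : ℤ) := by exact_mod_cast l2
    omega
  rw [hσ] at key1 key2
  push_cast at key1 key2
  have hsub : Set.Icc (D.p (n+1) j) (D.p (n+1) (j+1)) ⊆ Set.Icc (D.p n i) (D.p n (i+1)) := by
    apply Set.Icc_subset_Icc <;> linarith
  have hq := D.quarter n j hjlt i hilt hsub
  rw [hP2, hP1, hP4, hP3]
  push_cast
  linarith

/-- Iterated parent: a generation-`n+d` interval has a generation-`n` ancestor of `4^d`-fold length. -/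
lemma ancestor (n : ℕ) (d : ℕ) (k : ℤ) : ∃ k' : ℤ, D.P n k' ≤ D.P (n+d) k ∧
    D.P (n+d) (k+1) ≤ D.P n (k'+1) ∧
    (4:ℝ)^d * (D.P (n+d) (k+1) - D.P (n+d) k) ≤ D.P n (k'+1) - D.P n k' := by
  induction d generalizing k with
  | zero => exact ⟨k, le_rfl, le_rfl, by norm_num⟩
  | succ d ih =>
    have e : n + (d+1) = (n+d) + 1 := rfl
    rw [e]
    obtain ⟨k₁, h1, h2, h3⟩ := D.parent (n+d) k
    obtain ⟨k', g1, g2, g3⟩ := ih k₁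
    refine ⟨k', le_trans g1 h1, le_trans h2 g2, ?_⟩
    have hlen := D.P_len_pos (n+d+1) k
    calc (4:ℝ)^(d+1) * (D.P (n+d+1) (k+1) - D.P (n+d+1) k)
        = (4:ℝ)^d * (4 * (D.P (n+d+1) (k+1) - D.P (n+d+1) k)) := by ring
      _ ≤ (4:ℝ)^d * (D.P (n+d) (k₁+1) - D.P (n+d) k₁) := by
          apply mul_le_mul_of_nonneg_left _ (by positivity)
          linarith
      _ ≤ D.P n (k'+1) - D.P n k' := g3

lemma P_len (n : ℕ) (k : ℤ) : D.P n (k+1) - D.P n k =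
    D.p n ((k % (D.N n : ℤ)).toNat + 1) - D.p n ((k % (D.N n : ℤ)).toNat) := by
  rw [P_succ, P]; ring

lemma emod_succ_eq (n : ℕ) (k : ℤ) (h : (k % (D.N n : ℤ)).toNat + 1 < D.N n) :
    (k+1) % (D.N n : ℤ) = k % (D.N n : ℤ) + 1 := by
  have h4 : (4:ℤ) ≤ (D.N n : ℤ) := by exact_mod_cast D.four_le n
  have h3 := Int.emod_nonneg k (by omega : (D.N n : ℤ) ≠ 0)
  have h2 := Int.emod_lt_of_pos k (by omega : (0:ℤ) < (D.N n : ℤ))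
  rw [Int.add_emod, Int.emod_eq_of_lt (by omega : (0:ℤ) ≤ 1) (by omega)]
  exact Int.emod_eq_of_lt (by omega) (by omega)

lemma emod_succ_eq_zero (n : ℕ) (k : ℤ) (h : (k % (D.N n : ℤ)).toNat + 1 = D.N n) :
    (k+1) % (D.N n : ℤ) = 0 := by
  have h4 : (4:ℤ) ≤ (D.N n : ℤ) := by exact_mod_cast D.four_le n
  have h3 := Int.emod_nonneg k (by omega : (D.N n : ℤ) ≠ 0)
  have h2 := Int.emod_lt_of_pos k (by omega : (0:ℤ) < (D.N n : ℤ))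
  rw [Int.add_emod, Int.emod_eq_of_lt (by omega : (0:ℤ) ≤ 1) (by omega)]
  have : k % (D.N n : ℤ) + 1 = (D.N n : ℤ) := by omega
  rw [this]
  simp

/-- Adjacent intervals of the same generation have comparable lengths. -/
lemma adjacent_P (n : ℕ) (k : ℤ) :
    (D.P n (k+1) - D.P n k) / 2 ≤ D.P n (k+2) - D.P n (k+1) ∧
    D.P n (k+2) - D.P n (k+1) ≤ 2 * (D.P n (k+1) - D.P n k) := by
  set r := (k % (D.N n : ℤ)).toNat with hr
  have hrlt := D.emod_lt n k
  have hlen1 := D.P_len n k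
  have hlen2' := D.P_len n (k+1)
  have e22 : (k:ℤ) + 2 = (k+1) + 1 := by ring
  have hpos1 : 0 < D.p n (r+1) - D.p n r := sub_pos.mpr (D.mono n r hrlt)
  rcases lt_or_eq_of_le (by omega : r + 1 ≤ D.N n) with h | h
  · have e1 : (k+1) % (D.N n : ℤ) = (r:ℤ) + 1 := by
      have := D.emod_succ_eq n k (by omega)
      rw [this]
      have h3 := Int.emod_nonneg k (by have := D.N_pos n; omega : (D.N n : ℤ) ≠ 0)
      omega
    have hlen2 : D.P n (k+2) - D.P n (k+1) = D.p n (r+2) - D.p n (r+1) := by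
      rw [e22, hlen2', e1]
      have : ((r:ℤ)+1).toNat = r + 1 := by omega
      rw [this]
    have hadj := D.adjacent n r h
    rw [hlen1, hlen2]
    simp only [Set.mem_insert_iff, Set.mem_singleton_iff] at hadj
    have hne : D.p n (r+1) - D.p n r ≠ 0 := ne_of_gt hpos1
    rcases hadj with h' | h' | h' <;>
      · rw [div_eq_iff hne] at h'
        constructor <;> nlinarith
  · have e1 : (k+1) % (D.N n : ℤ) = 0 := D.emod_succ_eq_zero n k h
    have hlen2 : D.P n (k+2) - D.P n (k+1) = D.p n 1 - D.p n 0 := by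
      rw [e22, hlen2', e1]
      simp only [Int.toNat_zero, zero_add]
    have hadj := D.adjacent_wrap n
    have hN1 : D.p n (D.N n) - D.p n (D.N n - 1) = D.p n (r+1) - D.p n r := by
      have h5 : D.N n - 1 = r := by omega
      have h6 : D.N n = r + 1 := by omega
      rw [h5, h6]
    rw [hN1] at hadj
    rw [hlen1, hlen2]
    simp only [Set.mem_insert_iff, Set.mem_singleton_iff] at hadj
    have hne : D.p n (r+1) - D.p n r ≠ 0 := ne_of_gt hpos1
    rcases hadj with h' | h' | h' <;>
      · rw [div_eq_iff hne] at h'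
        constructor <;> nlinarith

end DyadicSubdivisions

section DyadicLenFacts

lemma two_zpow_mono {z w : ℤ} (h : z ≤ w) : (2:ℝ)^z ≤ (2:ℝ)^w :=
  zpow_le_zpow_right₀ one_le_two h

lemma two_zpow_pos (z : ℤ) : (0:ℝ) < (2:ℝ)^z := zpow_pos two_pos z

/-- `ℕ`-valued exponent of `dyadicLen`. -/
def eExp (K i : ℕ) : ℕ :=
  if K % 2 = 0 then min (min i (K-1-i) + 2) (K/2)
  else if min i (K - 1 - i) + 3 ≤ (K + 1) / 2 then min i (K-1-i) + 2
  else if min i (K - 1 - i) + 2 = (K + 1) / 2 then (K+1)/2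
  else (K+1)/2 - 1

lemma dyadicLen_eq (K i : ℕ) (hK : 4 ≤ K) (hi : i < K) :
    dyadicLen K i = (2:ℝ)^(-(eExp K i : ℤ)) := by
  unfold dyadicLen eExp
  split_ifs with h1 h2 h3 <;> congr 1 <;> omega

lemma eExp_le_left (K i : ℕ) (hK : 4 ≤ K) (hi : i < K) : eExp K i ≤ i + 2 := by
  unfold eExp; split_ifs <;> omega

lemma eExp_le_right (K i : ℕ) (hK : 4 ≤ K) (hi : i < K) : eExp K i ≤ (K - 1 - i) + 2 := by
  unfold eExp; split_ifs <;> omega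

lemma eExp_le_cap (K i : ℕ) (hK : 4 ≤ K) (hi : i < K) : eExp K i ≤ (K+1)/2 := by
  unfold eExp; split_ifs <;> omega

lemma eExp_good (K i : ℕ) (hK : 4 ≤ K) (hi : i < K)
    (h : min i (K-1-i) + 2 < (K+1)/2) : eExp K i = min i (K-1-i) + 2 := by
  unfold eExp; split_ifs <;> omega

lemma eExp_bad (K i : ℕ) (hK : 4 ≤ K) (hi : i < K)
    (h : (K+1)/2 ≤ min i (K-1-i) + 2) : (K+1)/2 - 1 ≤ eExp K i := by
  unfold eExp; split_ifs <;> omega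

lemma dyadicLen_pos (K i : ℕ) : 0 < dyadicLen K i := by
  unfold dyadicLen
  split_ifs <;> exact two_zpow_pos _

lemma dyadicLen_zero (K : ℕ) (hK : 4 ≤ K) : dyadicLen K 0 = (2:ℝ)^(-2 : ℤ) := by
  rw [dyadicLen_eq K 0 hK (by omega)]
  congr 1
  unfold eExp
  split_ifs <;> omega

lemma dyadicLen_last (K : ℕ) (hK : 4 ≤ K) : dyadicLen K (K-1) = (2:ℝ)^(-2 : ℤ) := by
  rw [dyadicLen_eq K (K-1) hK (by omega)]
  congr 1
  unfold eExp
  split_ifs <;> omega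

lemma dyadicLen_ge_left (K i : ℕ) (hK : 4 ≤ K) (hi : i < K) :
    (2:ℝ)^(-(i:ℤ)-2) ≤ dyadicLen K i := by
  rw [dyadicLen_eq K i hK hi]
  apply two_zpow_mono
  have := eExp_le_left K i hK hi
  omega

lemma dyadicLen_ge_right (K i : ℕ) (hK : 4 ≤ K) (hi : i < K) :
    (2:ℝ)^((i:ℤ)-(K:ℤ)-1) ≤ dyadicLen K i := by
  rw [dyadicLen_eq K i hK hi]
  apply two_zpow_mono
  have := eExp_le_right K i hK hi
  omega

lemma dyadicLen_ge_cap (K i : ℕ) (hK : 4 ≤ K) (hi : i < K) :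
    (2:ℝ)^(-(((K+1)/2 : ℕ):ℤ)) ≤ dyadicLen K i := by
  rw [dyadicLen_eq K i hK hi]
  apply two_zpow_mono
  have := eExp_le_cap K i hK hi
  omega

/-- Pointwise upper bound used for the contiguous sum estimate. -/
lemma dyadicLen_le (K i : ℕ) (hK : 4 ≤ K) (hi : i < K) :
    dyadicLen K i ≤ (2:ℝ)^(-(i:ℤ)-2) + (2:ℝ)^((i:ℤ)-(K:ℤ)-1) +
      (if (K+1)/2 ≤ min i (K-1-i) + 2 then 2*(2:ℝ)^(-(((K+1)/2 : ℕ):ℤ)) else 0) := by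
  rw [dyadicLen_eq K i hK hi]
  rcases lt_or_ge (min i (K-1-i) + 2) ((K+1)/2) with h | h
  · rw [if_neg (by omega)]
    have he := eExp_good K i hK hi h
    rcases Nat.le_or_le i (K-1-i) with hm | hm
    · have : (2:ℝ)^(-(eExp K i:ℤ)) ≤ (2:ℝ)^(-(i:ℤ)-2) := by
        apply two_zpow_mono; omega
      have := two_zpow_pos ((i:ℤ)-(K:ℤ)-1)
      linarith
    · have : (2:ℝ)^(-(eExp K i:ℤ)) ≤ (2:ℝ)^((i:ℤ)-(K:ℤ)-1) := by
        apply two_zpow_mono; omega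
      have := two_zpow_pos (-(i:ℤ)-2)
      linarith
  · rw [if_pos h]
    have he := eExp_bad K i hK hi h
    have h1 : (2:ℝ)^(-(eExp K i:ℤ)) ≤ (2:ℝ)^(-(((K+1)/2 : ℕ):ℤ)+1) := by
      apply two_zpow_mono; omega
    have h2 : (2:ℝ)^(-(((K+1)/2 : ℕ):ℤ)+1) = 2*(2:ℝ)^(-(((K+1)/2 : ℕ):ℤ)) := by
      rw [zpow_add_one₀ (by norm_num : (2:ℝ) ≠ 0)]
      ring
    have := two_zpow_pos (-(i:ℤ)-2)
    have := two_zpow_pos ((i:ℤ)-(K:ℤ)-1)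
    linarith

end DyadicLenFacts

section SumFacts

open Finset

lemma geo_sum_neg (i0 i1 : ℕ) (h : i0 ≤ i1) :
    ∑ i ∈ Finset.Icc i0 i1, (2:ℝ)^(-(i:ℤ)) ≤ (2:ℝ)^(-(i0:ℤ)+1) - (2:ℝ)^(-(i1:ℤ)) := by
  induction i1 with
  | zero =>
    have : i0 = 0 := by omega
    subst this
    rw [Finset.Icc_self, Finset.sum_singleton]
    norm_num
  | succ i1 ih =>
    rcases Nat.lt_or_ge i0 (i1+1) with h' | h'
    · rw [Finset.sum_Icc_succ_top (by omega : i0 ≤ i1 + 1)]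
      have hih := ih (by omega)
      have e : (2:ℝ)^(-((i1+1:ℕ):ℤ)) = (2:ℝ)^(-(i1:ℤ))/2 := by
        rw [show (-((i1+1:ℕ):ℤ)) = -(i1:ℤ) - 1 by push_cast; ring,
          zpow_sub_one₀ (by norm_num : (2:ℝ) ≠ 0)]
        ring
      rw [e]
      linarith
    · have : i0 = i1 + 1 := by omega
      subst this
      rw [Finset.Icc_self, Finset.sum_singleton]
      have e : (2:ℝ)^(-((i1+1:ℕ):ℤ)+1) = 2*(2:ℝ)^(-((i1+1:ℕ):ℤ)) := by
        rw [zpow_add_one₀ (by norm_num : (2:ℝ) ≠ 0)]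
        ring
      rw [e]
      have := two_zpow_pos (-((i1+1:ℕ):ℤ))
      linarith

lemma geo_sum_pos (i0 i1 : ℕ) (h : i0 ≤ i1) :
    ∑ i ∈ Finset.Icc i0 i1, (2:ℝ)^((i:ℤ)) ≤ (2:ℝ)^((i1:ℤ)+1) := by
  induction i1 with
  | zero =>
    have : i0 = 0 := by omega
    subst this
    rw [Finset.Icc_self, Finset.sum_singleton]
    norm_num
  | succ i1 ih =>
    have e : (2:ℝ)^(((i1+1:ℕ):ℤ)+1) = 2*(2:ℝ)^(((i1+1:ℕ):ℤ)) := by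
      rw [zpow_add_one₀ (by norm_num : (2:ℝ) ≠ 0)]; ring
    rcases Nat.lt_or_ge i0 (i1+1) with h' | h'
    · rw [Finset.sum_Icc_succ_top (by omega : i0 ≤ i1 + 1)]
      have hih := ih (by omega)
      have e2 : (2:ℝ)^((i1:ℤ)+1) = (2:ℝ)^(((i1+1:ℕ):ℤ)) := by
        congr 1 <;> omega
      rw [e]
      rw [e2] at hih
      have := two_zpow_pos (((i1+1:ℕ):ℤ))
      linarith
    · have : i0 = i1 + 1 := by omega
      subst this
      rw [Finset.Icc_self, Finset.sum_singleton, e]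
      have := two_zpow_pos (((i1+1:ℕ):ℤ))
      linarith

/-- Key estimate: a contiguous sum of dyadic lengths is controlled by its two end lengths. -/
lemma dyadicLen_sum_le (K i0 i1 : ℕ) (hK : 4 ≤ K) (h01 : i0 ≤ i1) (h1 : i1 < K) :
    ∑ i ∈ Finset.Icc i0 i1, dyadicLen K i ≤ 12 * (dyadicLen K i0 + dyadicLen K i1) := by
  set c : ℕ := (K+1)/2 with hc
  have step1 : ∑ i ∈ Finset.Icc i0 i1, dyadicLen K i ≤
      ∑ i ∈ Finset.Icc i0 i1, ((2:ℝ)^(-(i:ℤ)-2) + (2:ℝ)^((i:ℤ)-(K:ℤ)-1) +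
        (if c ≤ min i (K-1-i) + 2 then 2*(2:ℝ)^(-(c:ℤ)) else 0)) := by
    apply Finset.sum_le_sum
    intro i hi
    simp only [Finset.mem_Icc] at hi
    exact dyadicLen_le K i hK (by omega)
  rw [Finset.sum_add_distrib, Finset.sum_add_distrib] at step1
  -- first piece
  have piece1 : ∑ i ∈ Finset.Icc i0 i1, (2:ℝ)^(-(i:ℤ)-2) ≤ (2:ℝ)^(-(i0:ℤ)-1) := by
    have e : ∀ i : ℕ, (2:ℝ)^(-(i:ℤ)-2) = (2:ℝ)^(-(i:ℤ)) * (2:ℝ)^(-2:ℤ) := by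
      intro i
      rw [← zpow_add₀ (by norm_num : (2:ℝ) ≠ 0)]
      congr 1 <;> omega
    calc ∑ i ∈ Finset.Icc i0 i1, (2:ℝ)^(-(i:ℤ)-2)
        = (∑ i ∈ Finset.Icc i0 i1, (2:ℝ)^(-(i:ℤ))) * (2:ℝ)^(-2:ℤ) := by
          rw [Finset.sum_mul]; exact Finset.sum_congr rfl (fun i _ => e i)
      _ ≤ ((2:ℝ)^(-(i0:ℤ)+1) - (2:ℝ)^(-(i1:ℤ))) * (2:ℝ)^(-2:ℤ) := by
          apply mul_le_mul_of_nonneg_right (geo_sum_neg i0 i1 h01) (le_of_lt (two_zpow_pos _))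
      _ ≤ (2:ℝ)^(-(i0:ℤ)+1) * (2:ℝ)^(-2:ℤ) := by
          have := two_zpow_pos (-(i1:ℤ))
          have := two_zpow_pos (-2:ℤ)
          nlinarith
      _ = (2:ℝ)^(-(i0:ℤ)-1) := by
          rw [← zpow_add₀ (by norm_num : (2:ℝ) ≠ 0)]
          congr 1; ring
  -- second piece
  have piece2 : ∑ i ∈ Finset.Icc i0 i1, (2:ℝ)^((i:ℤ)-(K:ℤ)-1) ≤ (2:ℝ)^((i1:ℤ)-(K:ℤ)) := by
    have e : ∀ i : ℕ, (2:ℝ)^((i:ℤ)-(K:ℤ)-1) = (2:ℝ)^((i:ℤ)) * (2:ℝ)^(-(K:ℤ)-1) := by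
      intro i
      rw [← zpow_add₀ (by norm_num : (2:ℝ) ≠ 0)]
      congr 1 <;> omega
    calc ∑ i ∈ Finset.Icc i0 i1, (2:ℝ)^((i:ℤ)-(K:ℤ)-1)
        = (∑ i ∈ Finset.Icc i0 i1, (2:ℝ)^((i:ℤ))) * (2:ℝ)^(-(K:ℤ)-1) := by
          rw [Finset.sum_mul]; exact Finset.sum_congr rfl (fun i _ => e i)
      _ ≤ (2:ℝ)^((i1:ℤ)+1) * (2:ℝ)^(-(K:ℤ)-1) := by
          apply mul_le_mul_of_nonneg_right (geo_sum_pos i0 i1 h01) (le_of_lt (two_zpow_pos _))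
      _ = (2:ℝ)^((i1:ℤ)-(K:ℤ)) := by
          rw [← zpow_add₀ (by norm_num : (2:ℝ) ≠ 0)]
          congr 1; ring
  -- third piece
  have piece3 : ∑ i ∈ Finset.Icc i0 i1, (if c ≤ min i (K-1-i) + 2 then 2*(2:ℝ)^(-(c:ℤ)) else 0)
      ≤ 8 * (2:ℝ)^(-(c:ℤ)) := by
    have hw : (0:ℝ) ≤ 2*(2:ℝ)^(-(c:ℤ)) := by positivity
    classical
    rw [← Finset.sum_filter]
    have hcard : ((Finset.Icc i0 i1).filter (fun i => c ≤ min i (K-1-i) + 2)).card ≤ 4 := by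
      have hsub : ((Finset.Icc i0 i1).filter (fun i => c ≤ min i (K-1-i) + 2)) ⊆
          Finset.Icc (c-2) (c+1) := by
        intro i hi
        simp only [Finset.mem_filter, Finset.mem_Icc] at hi ⊢
        omega
      calc _ ≤ (Finset.Icc (c-2) (c+1)).card := Finset.card_le_card hsub
        _ ≤ 4 := by
          rw [Nat.card_Icc]
          omega
    rw [Finset.sum_const, nsmul_eq_mul]
    have hcardR : ((((Finset.Icc i0 i1).filter (fun i => c ≤ min i (K-1-i) + 2)).card : ℝ)) ≤ 4 := by
      exact_mod_cast hcard
    have hmul := mul_le_mul_of_nonneg_right hcardR hw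
    linarith
  -- combine
  have end1 : (2:ℝ)^(-(i0:ℤ)-1) ≤ 2 * dyadicLen K i0 := by
    have := dyadicLen_ge_left K i0 hK (by omega)
    have e : (2:ℝ)^(-(i0:ℤ)-1) = 2 * (2:ℝ)^(-(i0:ℤ)-2) := by
      rw [show (-(i0:ℤ)-1) = (-(i0:ℤ)-2) + 1 by ring, zpow_add_one₀ (by norm_num : (2:ℝ) ≠ 0)]
      ring
    linarith
  have end2 : (2:ℝ)^((i1:ℤ)-(K:ℤ)) ≤ 2 * dyadicLen K i1 := by
    have := dyadicLen_ge_right K i1 hK h1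
    have e : (2:ℝ)^((i1:ℤ)-(K:ℤ)) = 2 * (2:ℝ)^((i1:ℤ)-(K:ℤ)-1) := by
      rw [show ((i1:ℤ)-(K:ℤ)) = ((i1:ℤ)-(K:ℤ)-1) + 1 by ring,
        zpow_add_one₀ (by norm_num : (2:ℝ) ≠ 0)]
      ring
    linarith
  have end3 : (2:ℝ)^(-(c:ℤ)) ≤ dyadicLen K i0 := dyadicLen_ge_cap K i0 hK (by omega)
  have hp1 := dyadicLen_pos K i1
  have hp0 := dyadicLen_pos K i0
  linarith

end SumFacts

namespace DyadicSubdivisions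

variable (D : DyadicSubdivisions)

lemma P_of_nat (g : ℕ) (j : ℕ) (hj : j ≤ D.N g) (q : ℤ) :
    D.P g ((j : ℤ) + (D.N g : ℤ) * q) = D.p g j + q := by
  rcases lt_or_eq_of_le hj with h | h
  · have hN : ((D.N g : ℤ)) ≠ 0 := by have := D.N_pos g; positivity
    rw [P, Int.add_mul_emod_self_left, Int.add_mul_ediv_left _ _ hN,
      Int.emod_eq_of_lt (by positivity) (by exact_mod_cast h),
      Int.ediv_eq_zero_of_lt (by positivity) (by exact_mod_cast h)]
    simp
  · subst h
    have e : ((D.N g : ℕ) : ℤ) + (D.N g : ℤ) * q = 0 + (D.N g : ℤ) * (q + 1) := by ring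
    rw [e, P, Int.add_mul_emod_self_left, Int.add_mul_ediv_left _ _
      (by have := D.N_pos g; positivity : ((D.N g : ℤ)) ≠ 0)]
    simp only [Int.zero_emod, Int.zero_ediv, Int.toNat_zero, D.zero, D.last, zero_add]
    push_cast
    ring

/-- Transfer of the dyadic-children axiom to `P`. -/
lemma children (n : ℕ) (k : ℤ) : ∃ (c : ℤ) (K : ℕ), 4 ≤ K ∧
    D.P (n+1) c = D.P n k ∧ D.P (n+1) (c + K) = D.P n (k+1) ∧
    ∀ l < K, D.P (n+1) (c + l + 1) - D.P (n+1) (c + l) =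
      dyadicLen K l * (D.P n (k+1) - D.P n k) := by
  have hilt := D.emod_lt n k
  obtain ⟨k0, K, hK4, hKN, hp0, hpK, hlen⟩ := D.dyadic n (k % (D.N n : ℤ)).toNat hilt
  refine ⟨(k0 : ℤ) + (D.N (n+1) : ℤ) * (k / (D.N n : ℤ)), K, hK4, ?_, ?_, ?_⟩
  · have := D.P_of_nat (n+1) k0 (by omega) (k / (D.N n : ℤ))
    rw [this, hp0]
    rfl
  · have e : (k0 : ℤ) + (D.N (n+1) : ℤ) * (k / (D.N n : ℤ)) + (K : ℤ)
        = ((k0 + K : ℕ) : ℤ) + (D.N (n+1) : ℤ) * (k / (D.N n : ℤ)) := by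
      push_cast; ring
    rw [e, D.P_of_nat (n+1) (k0 + K) hKN _, hpK, D.P_succ n k]
  · intro l hl
    have e1 : (k0 : ℤ) + (D.N (n+1) : ℤ) * (k / (D.N n : ℤ)) + (l : ℤ) + 1
        = ((k0 + l + 1 : ℕ) : ℤ) + (D.N (n+1) : ℤ) * (k / (D.N n : ℤ)) := by
      push_cast; ring
    have e2 : (k0 : ℤ) + (D.N (n+1) : ℤ) * (k / (D.N n : ℤ)) + (l : ℤ)
        = ((k0 + l : ℕ) : ℤ) + (D.N (n+1) : ℤ) * (k / (D.N n : ℤ)) := by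
      push_cast; ring
    rw [e1, e2, D.P_of_nat (n+1) (k0 + l + 1) (by omega) _, D.P_of_nat (n+1) (k0 + l) (by omega) _,
      D.P_len n k]
    have h := hlen l hl
    linarith [h]

lemma two_zpow_neg_two : (2:ℝ)^(-2:ℤ) = 1/4 := by norm_num

/-- The last child of an interval ends at the same point and has exactly a quarter
of its length. -/
lemma last_child (n : ℕ) (k : ℤ) : ∃ c : ℤ,
    D.P (n+1) c = D.P n (k+1) ∧
    D.P (n+1) c - D.P (n+1) (c-1) = (D.P n (k+1) - D.P n k) / 4 := by
  obtain ⟨c0, K, hK4, h0, hK, hlen⟩ := D.children n k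
  refine ⟨c0 + K, hK, ?_⟩
  have e : c0 + (K:ℤ) - 1 = c0 + ((K-1 : ℕ) : ℤ) := by push_cast; omega
  have e2 : c0 + (K:ℤ) = (c0 + ((K-1:ℕ):ℤ)) + 1 := by push_cast; omega
  rw [e]
  rw [e2]
  rw [hlen (K-1) (by omega), dyadicLen_last K hK4, two_zpow_neg_two]
  ring

/-- The first child of an interval starts at the same point and has exactly a quarter
of its length. -/
lemma first_child (n : ℕ) (k : ℤ) : ∃ c : ℤ,
    D.P (n+1) c = D.P n k ∧
    D.P (n+1) (c+1) - D.P (n+1) c = (D.P n (k+1) - D.P n k) / 4 := by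
  obtain ⟨c0, K, hK4, h0, hK, hlen⟩ := D.children n k
  refine ⟨c0, h0, ?_⟩
  have h := hlen 0 (by omega)
  norm_num at h
  rw [h, dyadicLen_zero K hK4, two_zpow_neg_two]
  ring

/-- Iterated last children: an interval ending at `v` of length `|A|/4^j` for every `j`. -/
lemma last_chain (n : ℕ) (k : ℤ) (j : ℕ) : ∃ (g : ℕ) (c : ℤ), n ≤ g ∧
    D.P g c = D.P n (k+1) ∧
    D.P g c - D.P g (c-1) = (D.P n (k+1) - D.P n k) / 4^j := by
  induction j with
  | zero => exact ⟨n, k+1, le_rfl, rfl, by norm_num⟩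
  | succ j ih =>
    obtain ⟨g, c, hg, hc, hlen⟩ := ih
    obtain ⟨c', hc', hlen'⟩ := D.last_child g (c-1)
    have e : c - 1 + 1 = c := by ring
    rw [e] at hc' hlen'
    refine ⟨g+1, c', by omega, by rw [hc', hc], ?_⟩
    rw [hlen', hlen]
    ring

lemma first_chain (n : ℕ) (k : ℤ) (j : ℕ) : ∃ (g : ℕ) (c : ℤ), n ≤ g ∧
    D.P g c = D.P n k ∧
    D.P g (c+1) - D.P g c = (D.P n (k+1) - D.P n k) / 4^j := by
  induction j with
  | zero => exact ⟨n, k, le_rfl, rfl, by norm_num⟩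
  | succ j ih =>
    obtain ⟨g, c, hg, hc, hlen⟩ := ih
    obtain ⟨c', hc', hlen'⟩ := D.first_child g c
    refine ⟨g+1, c', by omega, by rw [hc', hc], ?_⟩
    rw [hlen', hlen]
    ring

/-- Right-anchored chain. -/
lemma chainR (n : ℕ) (k : ℤ) (a : ℝ) (ha : a < D.P n (k+1)) :
    ∃ (g : ℕ) (c : ℤ), a ≤ D.P g c ∧ D.P g (c+1) = D.P n (k+1) ∧
      min ((D.P n (k+1) - D.P n k) / 4) ((D.P n (k+1) - a) / 4) ≤ D.P g (c+1) - D.P g c := by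
  have hLpos : 0 < D.P n (k+1) - D.P n k := D.P_len_pos n k
  have hex : ∃ j : ℕ, (D.P n (k+1) - D.P n k) / 4^j ≤ D.P n (k+1) - a := by
    obtain ⟨j, hj⟩ := pow_unbounded_of_one_lt
      ((D.P n (k+1) - D.P n k) / (D.P n (k+1) - a)) (by norm_num : (1:ℝ) < 4)
    refine ⟨j, ?_⟩
    rw [div_le_iff₀ (by positivity)]
    rw [div_lt_iff₀ (by linarith)] at hj
    nlinarith [pow_pos (by norm_num : (0:ℝ) < 4) j]
  classical
  obtain ⟨g, c, hg, hc, hlen⟩ := D.last_chain n k (Nat.find hex)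
  have hjle : (D.P n (k+1) - D.P n k) / 4^(Nat.find hex) ≤ D.P n (k+1) - a := Nat.find_spec hex
  refine ⟨g, c - 1, ?_, by rw [sub_add_cancel]; exact hc, ?_⟩
  · rw [hc] at hlen
    linarith
  · rw [sub_add_cancel, hc] at *
    rw [hlen]
    rcases Nat.eq_zero_or_pos (Nat.find hex) with h0 | h0
    · rw [h0, pow_zero, div_one]
      calc min ((D.P n (k+1) - D.P n k) / 4) ((D.P n (k+1) - a) / 4)
          ≤ (D.P n (k+1) - D.P n k) / 4 := min_le_left _ _
        _ ≤ (D.P n (k+1) - D.P n k) := by linarith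
    · rcases Nat.eq_or_lt_of_le (by omega : 1 ≤ Nat.find hex) with h1 | h1
      · rw [← h1, pow_one]
        exact min_le_left _ _
      · have hj1 : ¬ ((D.P n (k+1) - D.P n k) / 4^(Nat.find hex - 1) ≤ D.P n (k+1) - a) :=
          Nat.find_min hex (by omega)
        push_neg at hj1
        have e : (D.P n (k+1) - D.P n k) / 4^(Nat.find hex)
            = ((D.P n (k+1) - D.P n k) / 4^(Nat.find hex - 1)) / 4 := by
          rw [div_div, ← pow_succ]
          congr 2
          omega
        rw [e]
        have h2 : (D.P n (k+1) - a)/4 < ((D.P n (k+1) - D.P n k) / 4^(Nat.find hex - 1))/4 := by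
          linarith
        exact le_trans (min_le_right _ _) (le_of_lt h2)

/-- Left-anchored chain. -/
lemma chainL (n : ℕ) (k : ℤ) (b : ℝ) (hb : D.P n k < b) :
    ∃ (g : ℕ) (c : ℤ), D.P g (c+1) ≤ b ∧ D.P g c = D.P n k ∧
      min ((D.P n (k+1) - D.P n k) / 4) ((b - D.P n k) / 4) ≤ D.P g (c+1) - D.P g c := by
  have hLpos : 0 < D.P n (k+1) - D.P n k := D.P_len_pos n k
  have hex : ∃ j : ℕ, (D.P n (k+1) - D.P n k) / 4^j ≤ b - D.P n k := by
    obtain ⟨j, hj⟩ := pow_unbounded_of_one_lt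
      ((D.P n (k+1) - D.P n k) / (b - D.P n k)) (by norm_num : (1:ℝ) < 4)
    refine ⟨j, ?_⟩
    rw [div_le_iff₀ (by positivity)]
    rw [div_lt_iff₀ (by linarith)] at hj
    nlinarith [pow_pos (by norm_num : (0:ℝ) < 4) j]
  classical
  obtain ⟨g, c, hg, hc, hlen⟩ := D.first_chain n k (Nat.find hex)
  have hjle : (D.P n (k+1) - D.P n k) / 4^(Nat.find hex) ≤ b - D.P n k := Nat.find_spec hex
  refine ⟨g, c, ?_, hc, ?_⟩
  · rw [hc] at hlen
    linarith
  · rw [hlen]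
    rcases Nat.eq_zero_or_pos (Nat.find hex) with h0 | h0
    · rw [h0, pow_zero, div_one]
      calc min ((D.P n (k+1) - D.P n k) / 4) ((b - D.P n k) / 4)
          ≤ (D.P n (k+1) - D.P n k) / 4 := min_le_left _ _
        _ ≤ (D.P n (k+1) - D.P n k) := by linarith
    · rcases Nat.eq_or_lt_of_le (by omega : 1 ≤ Nat.find hex) with h1 | h1
      · rw [← h1, pow_one]
        exact min_le_left _ _
      · have hj1 : ¬ ((D.P n (k+1) - D.P n k) / 4^(Nat.find hex - 1) ≤ b - D.P n k) :=
          Nat.find_min hex (by omega)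
        push_neg at hj1
        have e : (D.P n (k+1) - D.P n k) / 4^(Nat.find hex)
            = ((D.P n (k+1) - D.P n k) / 4^(Nat.find hex - 1)) / 4 := by
          rw [div_div, ← pow_succ]
          congr 2
          omega
        rw [e]
        have h2 : (b - D.P n k)/4 < ((D.P n (k+1) - D.P n k) / 4^(Nat.find hex - 1))/4 := by
          linarith
        exact le_trans (min_le_right _ _) (le_of_lt h2)

end DyadicSubdivisions

lemma eExp_ge_two (K i : ℕ) (hK : 4 ≤ K) (hi : i < K) : 2 ≤ eExp K i := by
  unfold eExp; split_ifs <;> omega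

lemma dyadicLen_le_quarter (K i : ℕ) (hK : 4 ≤ K) (hi : i < K) : dyadicLen K i ≤ 1/4 := by
  rw [dyadicLen_eq K i hK hi, ← DyadicSubdivisions.two_zpow_neg_two]
  apply two_zpow_mono
  have := eExp_ge_two K i hK hi
  omega

namespace DyadicSubdivisions

variable (D : DyadicSubdivisions)

lemma locate_between (g : ℕ) : ∀ (K : ℕ) (c0 : ℤ) (a : ℝ), D.P g c0 ≤ a → a < D.P g (c0 + K) →
    ∃ l : ℕ, l < K ∧ D.P g (c0 + l) ≤ a ∧ a < D.P g (c0 + l + 1) := by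
  intro K
  induction K with
  | zero =>
    intro c0 a h1 h2
    norm_num at h2
    exact absurd h2 (not_lt.mpr h1)
  | succ K ih =>
    intro c0 a h1 h2
    rcases lt_or_ge a (D.P g (c0 + K)) with h | h
    · obtain ⟨l, hl, hal, har⟩ := ih c0 a h1 h
      exact ⟨l, by omega, hal, har⟩
    · refine ⟨K, by omega, h, ?_⟩
      have e : c0 + ((K:ℕ)+1 : ℕ) = c0 + (K:ℤ) + 1 := by push_cast; ring
      rwa [e] at h2

lemma telescope (g : ℕ) (c0 : ℤ) (l0 : ℕ) : ∀ l1 : ℕ, l0 ≤ l1 →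
    ∑ l ∈ Finset.Icc l0 l1, (D.P g (c0 + l + 1) - D.P g (c0 + l))
      = D.P g (c0 + l1 + 1) - D.P g (c0 + l0) := by
  intro l1
  induction l1 with
  | zero =>
    intro h
    have : l0 = 0 := by omega
    subst this
    rw [Finset.Icc_self, Finset.sum_singleton]
  | succ l1 ih =>
    intro h
    rcases Nat.lt_or_ge l0 (l1+1) with h' | h'
    · rw [Finset.sum_Icc_succ_top (by omega : l0 ≤ l1 + 1), ih (by omega)]
      have e : c0 + ((l1:ℕ)+1 : ℕ) = c0 + (l1:ℤ) + 1 := by push_cast; ring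
      rw [e]
      ring
    · have : l0 = l1 + 1 := by omega
      subst this
      rw [Finset.Icc_self, Finset.sum_singleton]

/-- Inside any subdivision interval, any subinterval `[a,b]` contains a subdivision
interval of length at least `(b-a)/56`. -/
lemma block : ∀ (κ n : ℕ) (k : ℤ) (a b : ℝ), D.P n k ≤ a → b ≤ D.P n (k+1) → 0 < b - a →
    D.P n (k+1) - D.P n k ≤ 4^κ * (b-a) →
    ∃ (g : ℕ) (c : ℤ), a ≤ D.P g c ∧ D.P g (c+1) ≤ b ∧ (b-a)/56 ≤ D.P g (c+1) - D.P g c := by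
  intro κ
  induction κ with
  | zero =>
    intro n k a b ha hb hab hlen
    norm_num at hlen
    exact ⟨n, k, by linarith, by linarith, by linarith⟩
  | succ κ ih =>
    intro n k a b ha hb hab hlen
    obtain ⟨c0, K, hK4, h0, hK, hchild⟩ := D.children n k
    have hLp : 0 < D.P n (k+1) - D.P n k := D.P_len_pos n k
    have ha' : D.P (n+1) c0 ≤ a := by rw [h0]; exact ha
    have hbK : b ≤ D.P (n+1) (c0 + K) := by rw [hK]; exact hb
    obtain ⟨lm, hlm, hal, har⟩ := D.locate_between (n+1) K c0 a ha' (by linarith)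
    have hwlen : D.P (n+1) (c0 + lm + 1) - D.P (n+1) (c0 + lm)
        = dyadicLen K lm * (D.P n (k+1) - D.P n k) := hchild lm hlm
    rcases le_or_gt b (D.P (n+1) (c0 + lm + 1)) with hcase | hcase
    · -- the child `lm` contains `[a,b]`: recurse
      apply ih (n+1) (c0 + lm) a b hal hcase hab
      have hq : dyadicLen K lm ≤ 1/4 := dyadicLen_le_quarter K lm hK4 hlm
      calc D.P (n+1) (c0 + lm + 1) - D.P (n+1) (c0 + lm)
          = dyadicLen K lm * (D.P n (k+1) - D.P n k) := hwlen
        _ ≤ (1/4) * (D.P n (k+1) - D.P n k) := by nlinarith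
        _ ≤ (1/4) * (4^(κ+1) * (b-a)) := by nlinarith
        _ = 4^κ * (b-a) := by ring
    · -- [a,b] spans at least one child boundary w
      -- left piece via right-anchored chain in child lm
      obtain ⟨g1, c1, hg1a, hg1v, hg1len⟩ := D.chainR (n+1) (c0 + lm) a har
      have hlen1 : (D.P (n+1) (c0 + lm + 1) - a) / 4 ≤ D.P g1 (c1+1) - D.P g1 c1 := by
        refine le_trans (le_min ?_ le_rfl) hg1len
        have : D.P (n+1) (c0 + lm + 1) - a ≤ D.P (n+1) (c0 + lm + 1) - D.P (n+1) (c0 + lm) := by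
          linarith
        linarith
      rcases le_or_gt (b - a) (2*(D.P (n+1) (c0 + lm + 1) - a)) with hhalf | hhalf
      · -- left piece suffices
        refine ⟨g1, c1, hg1a, by rw [hg1v]; linarith, ?_⟩
        have h8 : (b-a)/8 ≤ D.P g1 (c1+1) - D.P g1 c1 := by linarith
        linarith [hab]
      · -- right part [w, b] is at least half of [a,b]
        -- find the child index below b
        have hwb : D.P (n+1) (c0 + lm + 1) < b := hcase
        have hblock : ∃ lb : ℕ, lm + 1 ≤ lb ∧ lb ≤ K ∧ D.P (n+1) (c0 + lb) ≤ b ∧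
            (lb = K ∨ b < D.P (n+1) (c0 + lb + 1)) := by
          rcases eq_or_lt_of_le hbK with he | hlt
          · exact ⟨K, by omega, le_rfl, le_of_eq he.symm, Or.inl rfl⟩
          · obtain ⟨lb, hlb, h1, h2⟩ := D.locate_between (n+1) K c0 b
              (by linarith [hal, har, hab] : D.P (n+1) c0 ≤ b) hlt
            have hlb1 : lm + 1 ≤ lb := by
              by_contra hcon
              push_neg at hcon
              have : (lb : ℤ) + 1 ≤ (lm : ℤ) + 1 := by exact_mod_cast hcon
              have hmono := (D.P_strictMono (n+1)).monotone
                (by omega : c0 + lb + 1 ≤ c0 + lm + 1)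
              linarith
            exact ⟨lb, hlb1, by omega, h1, Or.inr h2⟩
        obtain ⟨lb, hlb1, hlbK, hlbb, hlbcase⟩ := hblock
        rcases eq_or_lt_of_le hlb1 with heq | hlt2
        · -- single child (lm+1) covers [w, b]
          have hbb : b ≤ D.P (n+1) (c0 + lm + 1 + 1) := by
            rcases hlbcase with h | h
            · exfalso
              have e2 : c0 + (lb:ℤ) = c0 + (lm:ℤ) + 1 := by rw [← heq]; push_cast; ring
              rw [h] at e2
              rw [e2] at hbK
              linarith
            · have e2 : c0 + (lb:ℤ) + 1 = c0 + (lm:ℤ) + 1 + 1 := by rw [← heq]; push_cast; ring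
              rw [e2] at h
              linarith
          obtain ⟨g2, c2, hg2b, hg2u, hg2len⟩ := D.chainL (n+1) (c0 + lm + 1) b hwb
          refine ⟨g2, c2, by rw [hg2u]; linarith, hg2b, ?_⟩
          have : (b - D.P (n+1) (c0 + lm + 1))/4 ≤ D.P g2 (c2+1) - D.P g2 c2 := by
            refine le_trans (le_min ?_ le_rfl) hg2len
            linarith
          linarith
        · -- nonempty block of fully contained children between lm+1 and lb-1
          have hsum : ∑ l ∈ Finset.Icc (lm+1) (lb-1),
              (D.P (n+1) (c0 + l + 1) - D.P (n+1) (c0 + l))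
              = D.P (n+1) (c0 + (lb-1:ℕ) + 1) - D.P (n+1) (c0 + (lm+1:ℕ)) :=
            D.telescope (n+1) c0 (lm+1) (lb-1) (by omega)
          have hsum2 : ∑ l ∈ Finset.Icc (lm+1) (lb-1),
              (D.P (n+1) (c0 + l + 1) - D.P (n+1) (c0 + l))
              = (∑ l ∈ Finset.Icc (lm+1) (lb-1), dyadicLen K l) * (D.P n (k+1) - D.P n k) := by
            rw [Finset.sum_mul]
            apply Finset.sum_congr rfl
            intro l hl
            simp only [Finset.mem_Icc] at hl
            exact hchild l (by omega)
          have hV2 : ∑ l ∈ Finset.Icc (lm+1) (lb-1), dyadicLen K l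
              ≤ 12 * (dyadicLen K (lm+1) + dyadicLen K (lb-1)) :=
            dyadicLen_sum_le K (lm+1) (lb-1) hK4 (by omega) (by omega)
          have e5 : c0 + ((lb-1:ℕ):ℤ) + 1 = c0 + (lb:ℤ) := by push_cast; omega
          have e6 : c0 + ((lm+1:ℕ):ℤ) = c0 + (lm:ℤ) + 1 := by push_cast; ring
          rw [e5, e6] at hsum
          have hp1 := dyadicLen_pos K (lm+1)
          have hp2 := dyadicLen_pos K (lb-1)
          -- tail beyond P(c0+lb)
          have htail : b - D.P (n+1) (c0 + lb)
              ≤ 2 * (dyadicLen K (lb-1) * (D.P n (k+1) - D.P n k)) := by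
            rcases hlbcase with h | h
            · subst h
              have hpos := mul_pos hp2 hLp
              linarith
            · have hadj := (D.adjacent_P (n+1) (c0 + ((lb-1:ℕ):ℤ))).2
              have e1 : c0 + ((lb-1:ℕ):ℤ) + 1 = c0 + (lb:ℤ) := e5
              have e2 : c0 + ((lb-1:ℕ):ℤ) + 2 = c0 + (lb:ℤ) + 1 := by push_cast; omega
              rw [e1, e2] at hadj
              have hlb' := hchild (lb-1) (by omega)
              rw [e5] at hlb'
              linarith
          have hblocklen : D.P (n+1) (c0 + lb) - D.P (n+1) (c0 + lm + 1)
              ≤ 12 * (dyadicLen K (lm+1) + dyadicLen K (lb-1)) * (D.P n (k+1) - D.P n k) := by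
            have hmul := mul_le_mul_of_nonneg_right hV2 (le_of_lt hLp)
            rw [hsum] at hsum2
            linarith [hsum2, hmul]
          have hbw : b - D.P (n+1) (c0 + lm + 1)
              ≤ 14 * ((dyadicLen K (lm+1) + dyadicLen K (lb-1)) * (D.P n (k+1) - D.P n k)) := by
            have hpos1 : 0 ≤ dyadicLen K (lm+1) * (D.P n (k+1) - D.P n k) :=
              le_of_lt (mul_pos hp1 hLp)
            nlinarith
          have hmax : (b-a)/56 ≤ max (dyadicLen K (lm+1)) (dyadicLen K (lb-1))
              * (D.P n (k+1) - D.P n k) := by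
            have h1 : dyadicLen K (lm+1) + dyadicLen K (lb-1)
                ≤ 2 * max (dyadicLen K (lm+1)) (dyadicLen K (lb-1)) := by
              rcases le_total (dyadicLen K (lm+1)) (dyadicLen K (lb-1)) with h | h
              · rw [max_eq_right h]; linarith
              · rw [max_eq_left h]; linarith
            have hmul := mul_le_mul_of_nonneg_right h1 (le_of_lt hLp)
            linarith
          rcases le_total (dyadicLen K (lb-1)) (dyadicLen K (lm+1)) with hwhich | hwhich
          · -- use child lm+1
            rw [max_eq_left hwhich] at hmax
            refine ⟨n+1, c0 + lm + 1, by linarith, ?_, ?_⟩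
            · have hmono := (D.P_strictMono (n+1)).monotone
                (by omega : c0 + (lm:ℤ) + 1 + 1 ≤ c0 + (lb:ℤ))
              linarith [hlbb]
            · have hcl := hchild (lm+1) (by omega)
              rw [e6] at hcl
              rw [hcl]
              exact hmax
          · -- use child lb-1
            rw [max_eq_right hwhich] at hmax
            refine ⟨n+1, c0 + ((lb-1:ℕ):ℤ), ?_, ?_, ?_⟩
            · have hmono := (D.P_strictMono (n+1)).monotone
                (by omega : c0 + (lm:ℤ) + 1 ≤ c0 + ((lb-1:ℕ):ℤ))
              linarith
            · rw [e5]
              linarith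
            · have hcl := hchild (lb-1) (by omega)
              rw [hcl]
              exact hmax

end DyadicSubdivisions

namespace DyadicSubdivisions

variable (D : DyadicSubdivisions)

/-- If `Jᵐ` is maximal in `[x-t,x]` and `Iⁿ` is maximal in `[x,x+t]`, then `m < n + 5`. -/
lemma not_far_left (x t : ℝ) (ht0 : 0 < t) (m n : ℕ) (κ μ : ℤ)
    (hJl : x - t ≤ D.P m κ) (hJr : D.P m (κ+1) ≤ x)
    (hJmax : ∀ (g : ℕ) (c : ℤ), x - t ≤ D.P g c → D.P g (c+1) ≤ x →
      D.P g (c+1) - D.P g c ≤ D.P m (κ+1) - D.P m κ)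
    (hIl : x ≤ D.P n μ) (hIr : D.P n (μ+1) ≤ x + t) :
    m < n + 5 := by
  by_contra hcon
  push_neg at hcon
  have hd5 : 5 ≤ m - n := by omega
  have hLJ : 0 < D.P m (κ+1) - D.P m κ := D.P_len_pos m κ
  have hLI : 0 < D.P n (μ+1) - D.P n μ := D.P_len_pos n μ
  -- the ancestor A of Jᵐ at generation n
  obtain ⟨ν, hA1', hA2', hA3'⟩ := D.ancestor n (m-n) κ
  have em : n + (m - n) = m := by omega
  rw [em] at hA1' hA2' hA3'
  have hpow : (4:ℝ)^(5:ℕ) ≤ (4:ℝ)^(m-n) :=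
    pow_le_pow_right₀ (by norm_num : (1:ℝ) ≤ 4) hd5
  have hA3 : 1024 * (D.P m (κ+1) - D.P m κ) ≤ D.P n (ν+1) - D.P n ν := by
    have h1 : (4:ℝ)^(5:ℕ) * (D.P m (κ+1) - D.P m κ) ≤ (4:ℝ)^(m-n) * (D.P m (κ+1) - D.P m κ) :=
      mul_le_mul_of_nonneg_right hpow (le_of_lt hLJ)
    have e : (4:ℝ)^(5:ℕ) = 1024 := by norm_num
    rw [e] at h1
    linarith
  have hαx : D.P n ν < x := by linarith
  have eν1 : ν - 1 + 1 = ν := by ring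
  have eν2 : ν - 1 + 2 = ν + 1 := by ring
  have eν3 : ν + 1 + 1 = ν + 2 := by ring
  rcases le_or_gt x (D.P n (ν+1)) with hρ | hρ
  · -- right end of A at or beyond x
    rcases le_or_gt (D.P n ν) (x-t) with hα | hα
    · -- Case I : [x-t, x] ⊆ A, use block
      obtain ⟨κb, hκb⟩ := pow_unbounded_of_one_lt (1/t) (by norm_num : (1:ℝ) < 4)
      have hblockpre : D.P n (ν+1) - D.P n ν ≤ 4^κb * (x - (x-t)) := by
        have h1 := D.P_len_le_one n ν
        rw [div_lt_iff₀ ht0] at hκb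
        have e : x - (x-t) = t := by ring
        rw [e]
        nlinarith
      obtain ⟨g, c, hg1, hg2, hg3⟩ := D.block κb n ν (x-t) x hα hρ (by linarith) hblockpre
      have hLJt : t/56 ≤ D.P m (κ+1) - D.P m κ := by
        have := hJmax g c hg1 hg2
        have e : x - (x-t) = t := by ring
        rw [e] at hg3
        linarith
      have hadj := (D.adjacent_P n ν).1
      have hνμ : ν < μ := by
        apply (D.P_strictMono n).lt_iff_lt.mp
        linarith
      have hmono : D.P n (ν+2) ≤ D.P n (μ+1) := (D.P_strictMono n).monotone (by omega)
      linarith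
    · -- Case III' : x-t < α, x ≤ ρ
      obtain ⟨g, c, hc1, hc2, hc3⟩ := D.chainL n ν x hαx
      have hlenle : D.P g (c+1) - D.P g c ≤ D.P m (κ+1) - D.P m κ := by
        apply hJmax g c _ hc1
        rw [hc2]
        linarith
      have hmle := le_trans hc3 hlenle
      have hxα4 : x - D.P n ν ≤ 4 * (D.P m (κ+1) - D.P m κ) := by
        rcases le_total ((D.P n (ν+1) - D.P n ν)/4) ((x - D.P n ν)/4) with hm | hm
        · rw [min_eq_left hm] at hmle
          linarith
        · rw [min_eq_right hm] at hmle
          linarith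
      -- left neighbour A''
      have hadj2 := (D.adjacent_P n (ν-1)).2
      rw [eν1, eν2] at hadj2
      rcases le_or_gt (x-t) (D.P n (ν-1)) with hcc | hcc
      · have := hJmax n (ν-1) hcc (by rw [eν1]; linarith)
        rw [eν1] at this
        linarith
      · obtain ⟨g2, c2, hd1, hd2, hd3⟩ := D.chainR n (ν-1) (x-t) (by rw [eν1]; linarith)
        rw [eν1] at hd2 hd3
        have hlen2 : D.P g2 (c2+1) - D.P g2 c2 ≤ D.P m (κ+1) - D.P m κ := by
          apply hJmax g2 c2 hd1
          rw [hd2]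
          linarith
        have hmle2 := le_trans hd3 hlen2
        have hαxt4 : D.P n ν - (x-t) ≤ 4 * (D.P m (κ+1) - D.P m κ) := by
          rcases le_total ((D.P n ν - D.P n (ν-1))/4) ((D.P n ν - (x-t))/4) with hm | hm
          · rw [min_eq_left hm] at hmle2
            linarith
          · rw [min_eq_right hm] at hmle2
            linarith
        have ht8 : t ≤ 8 * (D.P m (κ+1) - D.P m κ) := by linarith
        have hνμ : ν < μ := by
          apply (D.P_strictMono n).lt_iff_lt.mp
          linarith
        have hmono : D.P n (ν+1) ≤ D.P n μ := (D.P_strictMono n).monotone (by omega)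
        linarith
  · -- ρ < x
    rcases le_or_gt (x-t) (D.P n ν) with hα | hα
    · -- Case II : A ⊆ [x-t, x]
      have := hJmax n ν hα (le_of_lt hρ)
      linarith
    · -- Case B2 : α < x-t, ρ < x
      have hρxt : x - t < D.P n (ν+1) := by linarith
      obtain ⟨g, c, hc1, hc2, hc3⟩ := D.chainR n ν (x-t) hρxt
      have hlenle : D.P g (c+1) - D.P g c ≤ D.P m (κ+1) - D.P m κ := by
        apply hJmax g c hc1
        rw [hc2]
        linarith
      have hmle := le_trans hc3 hlenle
      have hρ4 : D.P n (ν+1) - (x-t) ≤ 4 * (D.P m (κ+1) - D.P m κ) := by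
        rcases le_total ((D.P n (ν+1) - D.P n ν)/4) ((D.P n (ν+1) - (x-t))/4) with hm | hm
        · rw [min_eq_left hm] at hmle
          linarith
        · rw [min_eq_right hm] at hmle
          linarith
      have hadj := (D.adjacent_P n ν).1
      rcases le_or_gt (D.P n (ν+2)) x with hcc | hcc
      · have := hJmax n (ν+1) (by linarith) (by rw [eν3]; linarith)
        rw [eν3] at this
        linarith
      · obtain ⟨g2, c2, hd1, hd2, hd3⟩ := D.chainL n (ν+1) x hρ
        rw [eν3] at hd3
        have hlen2 : D.P g2 (c2+1) - D.P g2 c2 ≤ D.P m (κ+1) - D.P m κ := by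
          apply hJmax g2 c2 _ hd1
          rw [hd2]
          linarith
        have hmle2 := le_trans hd3 hlen2
        have hx4 : x - D.P n (ν+1) ≤ 4 * (D.P m (κ+1) - D.P m κ) := by
          rcases le_total ((D.P n (ν+2) - D.P n (ν+1))/4) ((x - D.P n (ν+1))/4) with hm | hm
          · rw [min_eq_left hm] at hmle2
            linarith
          · rw [min_eq_right hm] at hmle2
            linarith
        have ht8 : t ≤ 8 * (D.P m (κ+1) - D.P m κ) := by linarith
        have hνμ : ν + 1 < μ := by
          apply (D.P_strictMono n).lt_iff_lt.mp
          linarith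
        have hmono : D.P n (ν+2) ≤ D.P n μ := (D.P_strictMono n).monotone (by omega)
        linarith

end DyadicSubdivisions

namespace DyadicSubdivisions

variable (D : DyadicSubdivisions)

/-- Mirror statement: `n < m + 5`. -/
lemma not_far_right (x t : ℝ) (ht0 : 0 < t) (m n : ℕ) (κ μ : ℤ)
    (hJl : x - t ≤ D.P m κ) (hJr : D.P m (κ+1) ≤ x)
    (hIl : x ≤ D.P n μ) (hIr : D.P n (μ+1) ≤ x + t)
    (hImax : ∀ (g : ℕ) (c : ℤ), x ≤ D.P g c → D.P g (c+1) ≤ x + t →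
      D.P g (c+1) - D.P g c ≤ D.P n (μ+1) - D.P n μ) :
    n < m + 5 := by
  by_contra hcon
  push_neg at hcon
  have hd5 : 5 ≤ n - m := by omega
  have hLJ : 0 < D.P m (κ+1) - D.P m κ := D.P_len_pos m κ
  have hLI : 0 < D.P n (μ+1) - D.P n μ := D.P_len_pos n μ
  -- the ancestor A of Iⁿ at generation m
  obtain ⟨ν, hA1', hA2', hA3'⟩ := D.ancestor m (n-m) μ
  have em : m + (n - m) = n := by omega
  rw [em] at hA1' hA2' hA3'
  have hpow : (4:ℝ)^(5:ℕ) ≤ (4:ℝ)^(n-m) :=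
    pow_le_pow_right₀ (by norm_num : (1:ℝ) ≤ 4) hd5
  have hA3 : 1024 * (D.P n (μ+1) - D.P n μ) ≤ D.P m (ν+1) - D.P m ν := by
    have h1 : (4:ℝ)^(5:ℕ) * (D.P n (μ+1) - D.P n μ) ≤ (4:ℝ)^(n-m) * (D.P n (μ+1) - D.P n μ) :=
      mul_le_mul_of_nonneg_right hpow (le_of_lt hLI)
    have e : (4:ℝ)^(5:ℕ) = 1024 := by norm_num
    rw [e] at h1
    linarith
  have hρx : x < D.P m (ν+1) := by linarith
  have eν1 : ν - 1 + 1 = ν := by ring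
  have eν2 : ν - 1 + 2 = ν + 1 := by ring
  have eν3 : ν + 1 + 1 = ν + 2 := by ring
  rcases le_or_gt (D.P m (ν+1)) (x+t) with hρ | hρ
  · -- right end of A at or before x+t
    rcases le_or_gt x (D.P m ν) with hα | hα
    · -- A ⊆ [x, x+t]
      have := hImax m ν hα hρ
      linarith
    · -- M-IV : α < x < ρ ≤ x+t
      obtain ⟨g, c, hc1, hc2, hc3⟩ := D.chainR m ν x hρx
      have hlenle : D.P g (c+1) - D.P g c ≤ D.P n (μ+1) - D.P n μ := by
        apply hImax g c hc1
        rw [hc2]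
        linarith
      have hmle := le_trans hc3 hlenle
      have hρ4 : D.P m (ν+1) - x ≤ 4 * (D.P n (μ+1) - D.P n μ) := by
        rcases le_total ((D.P m (ν+1) - D.P m ν)/4) ((D.P m (ν+1) - x)/4) with hm | hm
        · rw [min_eq_left hm] at hmle
          linarith
        · rw [min_eq_right hm] at hmle
          linarith
      have hadj := (D.adjacent_P m ν).1
      rcases le_or_gt (D.P m (ν+2)) (x+t) with hcc | hcc
      · have := hImax m (ν+1) (by linarith) (by rw [eν3]; linarith)
        rw [eν3] at this
        linarith
      · have hx4 : (x+t) - D.P m (ν+1) ≤ 4 * (D.P n (μ+1) - D.P n μ) := by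
          rcases eq_or_lt_of_le hρ with he | hlt
          · rw [he]
            linarith
          · obtain ⟨g2, c2, hd1, hd2, hd3⟩ := D.chainL m (ν+1) (x+t) hlt
            rw [eν3] at hd3
            have hlen2 : D.P g2 (c2+1) - D.P g2 c2 ≤ D.P n (μ+1) - D.P n μ := by
              apply hImax g2 c2 _ hd1
              rw [hd2]
              linarith
            have hmle2 := le_trans hd3 hlen2
            rcases le_total ((D.P m (ν+2) - D.P m (ν+1))/4) (((x+t) - D.P m (ν+1))/4) with hm | hm
            · rw [min_eq_left hm] at hmle2
              linarith
            · rw [min_eq_right hm] at hmle2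
              linarith
        have ht8 : t ≤ 8 * (D.P n (μ+1) - D.P n μ) := by linarith
        have hκν : κ + 1 < ν + 1 := by
          apply (D.P_strictMono m).lt_iff_lt.mp
          linarith
        have hmono : D.P m (κ+1) ≤ D.P m ν := (D.P_strictMono m).monotone (by omega)
        linarith
  · -- x+t < ρ
    rcases le_or_gt (D.P m ν) x with hα | hα
    · -- M-I : [x, x+t] ⊆ A, use block
      obtain ⟨κb, hκb⟩ := pow_unbounded_of_one_lt (1/t) (by norm_num : (1:ℝ) < 4)
      have hblockpre : D.P m (ν+1) - D.P m ν ≤ 4^κb * ((x+t) - x) := by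
        have h1 := D.P_len_le_one m ν
        rw [div_lt_iff₀ ht0] at hκb
        have e : (x+t) - x = t := by ring
        rw [e]
        nlinarith
      obtain ⟨g, c, hg1, hg2, hg3⟩ := D.block κb m ν x (x+t) hα (by linarith) (by linarith)
        hblockpre
      have hLIt : t/56 ≤ D.P n (μ+1) - D.P n μ := by
        have := hImax g c hg1 hg2
        have e : (x+t) - x = t := by ring
        rw [e] at hg3
        linarith
      have hadj2 := (D.adjacent_P m (ν-1)).2
      rw [eν1, eν2] at hadj2
      have hκν : κ + 1 < ν + 1 := by
        apply (D.P_strictMono m).lt_iff_lt.mp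
        linarith
      have hmono : x - t ≤ D.P m (ν-1) := by
        have := (D.P_strictMono m).monotone (by omega : κ ≤ ν - 1)
        linarith
      linarith
    · -- M-III : x < α, x+t < ρ
      have hαxt : D.P m ν < x + t := by linarith
      obtain ⟨g, c, hc1, hc2, hc3⟩ := D.chainL m ν (x+t) hαxt
      have hlenle : D.P g (c+1) - D.P g c ≤ D.P n (μ+1) - D.P n μ := by
        apply hImax g c _ hc1
        rw [hc2]
        linarith
      have hmle := le_trans hc3 hlenle
      have hα4 : (x+t) - D.P m ν ≤ 4 * (D.P n (μ+1) - D.P n μ) := by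
        rcases le_total ((D.P m (ν+1) - D.P m ν)/4) (((x+t) - D.P m ν)/4) with hm | hm
        · rw [min_eq_left hm] at hmle
          linarith
        · rw [min_eq_right hm] at hmle
          linarith
      have hadj2 := (D.adjacent_P m (ν-1)).2
      rw [eν1, eν2] at hadj2
      rcases le_or_gt x (D.P m (ν-1)) with hcc | hcc
      · have := hImax m (ν-1) hcc (by rw [eν1]; linarith)
        rw [eν1] at this
        linarith
      · obtain ⟨g2, c2, hd1, hd2, hd3⟩ := D.chainR m (ν-1) x (by rw [eν1]; linarith)
        rw [eν1] at hd2 hd3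
        have hlen2 : D.P g2 (c2+1) - D.P g2 c2 ≤ D.P n (μ+1) - D.P n μ := by
          apply hImax g2 c2 hd1
          rw [hd2]
          linarith
        have hmle2 := le_trans hd3 hlen2
        have hαx4 : D.P m ν - x ≤ 4 * (D.P n (μ+1) - D.P n μ) := by
          rcases le_total ((D.P m ν - D.P m (ν-1))/4) ((D.P m ν - x)/4) with hm | hm
          · rw [min_eq_left hm] at hmle2
            linarith
          · rw [min_eq_right hm] at hmle2
            linarith
        have ht8 : t ≤ 8 * (D.P n (μ+1) - D.P n μ) := by linarith
        have hκν : κ + 1 < ν := by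
          apply (D.P_strictMono m).lt_iff_lt.mp
          linarith
        have hmono : D.P m (κ+1) ≤ D.P m (ν-1) := (D.P_strictMono m).monotone (by omega)
        linarith

end DyadicSubdivisions

/-- If `Jᵐ ∈ 𝓘ᵐ` and `Iⁿ ∈ 𝓘ⁿ` are largest subdivision intervals contained in the two
adjacent intervals `[x−t, x]` and `[x, x+t]` of `S¹`, then `|m − n| ≤ 4`. -/

theorem order_estimate (D : DyadicSubdivisions) (x t : ℝ) (ht0 : 0 < t)
    (ht : t ≤ 1 / 2) (m j n i : ℕ)
    (hJ : ContainedIn D m j (x - t) x)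
    (hJmax : D.p m (j + 1) - D.p m j = deltaMax D (x - t) x)
    (hI : ContainedIn D n i x (x + t))
    (hImax : D.p n (i + 1) - D.p n i = deltaMax D x (x + t)) :
    |(m : ℤ) - (n : ℤ)| ≤ 4 := by
  classical
  obtain ⟨hjN, mJ, hJ1, hJ2⟩ := hJ
  obtain ⟨hiN, mI, hI1, hI2⟩ := hI
  set κ : ℤ := (j:ℤ) + (D.N m : ℤ) * mJ with hκdef
  set μ : ℤ := (i:ℤ) + (D.N n : ℤ) * mI with hμdef
  have hPκ : D.P m κ = D.p m j + mJ := D.P_of_nat m j (le_of_lt hjN) mJ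
  have hPκ1 : D.P m (κ+1) = D.p m (j+1) + mJ := by
    have e : κ + 1 = ((j+1:ℕ):ℤ) + (D.N m : ℤ) * mJ := by rw [hκdef]; push_cast; ring
    rw [e]
    exact D.P_of_nat m (j+1) hjN mJ
  have hPμ : D.P n μ = D.p n i + mI := D.P_of_nat n i (le_of_lt hiN) mI
  have hPμ1 : D.P n (μ+1) = D.p n (i+1) + mI := by
    have e : μ + 1 = ((i+1:ℕ):ℤ) + (D.N n : ℤ) * mI := by rw [hμdef]; push_cast; ring
    rw [e]
    exact D.P_of_nat n (i+1) hiN mI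
  -- bounded above
  have hbddJ : BddAbove {d : ℝ | ∃ n' j', ContainedIn D n' j' (x-t) x ∧
      d = D.p n' (j'+1) - D.p n' j'} := by
    refine ⟨t, ?_⟩
    rintro d ⟨n', j', ⟨hj', mm, h1, h2⟩, rfl⟩
    have : (D.p n' (j'+1) + mm) - (D.p n' j' + mm) ≤ x - (x - t) := by linarith
    linarith
  have hbddI : BddAbove {d : ℝ | ∃ n' j', ContainedIn D n' j' x (x+t) ∧
      d = D.p n' (j'+1) - D.p n' j'} := by
    refine ⟨t, ?_⟩
    rintro d ⟨n', j', ⟨hj', mm, h1, h2⟩, rfl⟩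
    have : (D.p n' (j'+1) + mm) - (D.p n' j' + mm) ≤ (x + t) - x := by linarith
    linarith
  have hJmaxP : ∀ (g : ℕ) (c : ℤ), x - t ≤ D.P g c → D.P g (c+1) ≤ x →
      D.P g (c+1) - D.P g c ≤ D.P m (κ+1) - D.P m κ := by
    intro g c h1 h2
    have hmem : (D.P g (c+1) - D.P g c) ∈ {d : ℝ | ∃ n' j', ContainedIn D n' j' (x-t) x ∧
        d = D.p n' (j'+1) - D.p n' j'} := by
      refine ⟨g, (c % (D.N g : ℤ)).toNat, ⟨D.emod_lt g c, c / (D.N g : ℤ), ?_, ?_⟩,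
        D.P_len g c⟩
      · exact h1
      · rw [← D.P_succ g c]
        exact h2
    have hle : D.P g (c+1) - D.P g c ≤ deltaMax D (x-t) x := le_csSup hbddJ hmem
    rw [← hJmax] at hle
    linarith [hPκ, hPκ1, hle]
  have hImaxP : ∀ (g : ℕ) (c : ℤ), x ≤ D.P g c → D.P g (c+1) ≤ x + t →
      D.P g (c+1) - D.P g c ≤ D.P n (μ+1) - D.P n μ := by
    intro g c h1 h2
    have hmem : (D.P g (c+1) - D.P g c) ∈ {d : ℝ | ∃ n' j', ContainedIn D n' j' x (x+t) ∧
        d = D.p n' (j'+1) - D.p n' j'} := by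
      refine ⟨g, (c % (D.N g : ℤ)).toNat, ⟨D.emod_lt g c, c / (D.N g : ℤ), ?_, ?_⟩,
        D.P_len g c⟩
      · exact h1
      · rw [← D.P_succ g c]
        exact h2
    have hle : D.P g (c+1) - D.P g c ≤ deltaMax D x (x+t) := le_csSup hbddI hmem
    rw [← hImax] at hle
    linarith [hPμ, hPμ1, hle]
  have h1 := D.not_far_left x t ht0 m n κ μ (by rw [hPκ]; exact hJ1) (by rw [hPκ1]; exact hJ2)
    hJmaxP (by rw [hPμ]; exact hI1) (by rw [hPμ1]; exact hI2)
  have h2 := D.not_far_right x t ht0 m n κ μ (by rw [hPκ]; exact hJ1) (by rw [hPκ1]; exact hJ2)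
    (by rw [hPμ]; exact hI1) (by rw [hPμ1]; exact hI2) hImaxP
  rw [abs_le]
  omega
end
end

section
/- Let Γ be a 1-bounded turning metric Jordan curve with nested arc subdivisions 𝒢ⁿ (same-generation diameter ratios in [1/2,2], generation decay ratio in [1/16, 1/4]) and let 𝓘ⁿ be combinatorially equivalent nested interval subdivisions of S¹ (Iⁿ⁺¹ᵢ ⊆ Iⁿⱼ ⟺ Γⁿ⁺¹ᵢ ⊆ Γⁿⱼ). Let φ : S¹ → Γ be the map sending endpoints of Iⁿⱼ to corresponding endpoints of Γⁿⱼ, extended by continuity. Then φ is a well-defined homeomorphism of S¹ onto Γ. -/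
open Metric Set

noncomputable section

/-- The closed arc on the unit circle from `x` counterclockwise to `y`. -/
def arcCCW (x y : S1) : Set S1 :=
  (fun t : ℝ => x + (t : S1)) '' Set.Icc 0 ((AddCircle.equivIco 1 0 (y - x) : ℝ))

/-- The diameter distance on a Jordan curve `Γ` parametrized by `e : S1 ≃ₜ Γ`. -/
def ddist {Γ : Type*} [MetricSpace Γ] (e : S1 ≃ₜ Γ) (x y : Γ) : ℝ :=
  min (diam (e '' arcCCW (e.symm x) (e.symm y))) (diam (e '' arcCCW (e.symm y) (e.symm x)))

/-- The arc of `Γ` corresponding to the parameter interval `[u, v] ⊆ [0,1]`. -/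
def garc {Γ : Type*} [MetricSpace Γ] (e : S1 ≃ₜ Γ) (u v : ℝ) : Set Γ :=
  e '' ((fun t : ℝ => (t : S1)) '' Set.Icc u v)

section Aux

variable (N : ℕ → ℕ) (u v : ℕ → ℕ → ℝ)

/-- Monotone extension map built from corresponding subdivision points. -/
def Fsup : ℝ → ℝ := fun t => sSup {y | ∃ n j, j ≤ N n ∧ u n j ≤ t ∧ v n j = y}

variable (humem : ∀ n j, j ≤ N n → u n j ∈ Set.Icc (0:ℝ) 1)
  (hvmem : ∀ n j, j ≤ N n → v n j ∈ Set.Icc (0:ℝ) 1)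
  (hu00 : u 0 0 = 0) (hv00 : v 0 0 = 0)
  (hcomp : ∀ n i m j, i ≤ N n → j ≤ N m → (u n i ≤ u m j ↔ v n i ≤ v m j))

include hvmem in
lemma Fsup_bdd (t : ℝ) : BddAbove {y | ∃ n j, j ≤ N n ∧ u n j ≤ t ∧ v n j = y} := by
  refine ⟨1, ?_⟩; rintro y ⟨n, j, hj, -, rfl⟩; exact (hvmem n j hj).2

include hvmem hcomp in
lemma Fsup_at (n : ℕ) (j : ℕ) (hj : j ≤ N n) : Fsup N u v (u n j) = v n j := by
  apply le_antisymm
  · refine csSup_le ⟨v n j, n, j, hj, le_rfl, rfl⟩ ?_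
    rintro y ⟨m, i, hi, hle, rfl⟩
    exact (hcomp m i n j hi hj).mp hle
  · exact le_csSup (Fsup_bdd N u v hvmem _) ⟨n, j, hj, le_rfl, rfl⟩

include humem hvmem hu00 in
lemma Fsup_mono : Monotone (Fsup N u v) := by
  intro s t hst
  by_cases hs : (0:ℝ) ≤ s
  · refine csSup_le_csSup (Fsup_bdd N u v hvmem t)
      ⟨v 0 0, 0, 0, Nat.zero_le _, by rw [hu00]; exact hs, rfl⟩ ?_
    rintro y ⟨n, j, hj, hle, rfl⟩; exact ⟨n, j, hj, hle.trans hst, rfl⟩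
  · push_neg at hs
    have hSs : {y | ∃ n j, j ≤ N n ∧ u n j ≤ s ∧ v n j = y} = ∅ := by
      ext y; simp only [mem_setOf_eq, mem_empty_iff_false, iff_false]
      rintro ⟨n, j, hj, hle, rfl⟩
      exact absurd ((humem n j hj).1.trans hle) (not_le.mpr hs)
    show sSup _ ≤ sSup _
    rw [hSs, Real.sSup_empty]
    by_cases ht : {y | ∃ n j, j ≤ N n ∧ u n j ≤ t ∧ v n j = y}.Nonempty
    · obtain ⟨y, n, j, hj, hle, rfl⟩ := ht
      exact le_trans (hvmem n j hj).1 (le_csSup (Fsup_bdd N u v hvmem t) ⟨n, j, hj, hle, rfl⟩)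
    · rw [not_nonempty_iff_eq_empty.mp ht, Real.sSup_empty]

include humem hvmem hu00 hv00 hcomp in
lemma Fsup_inv
    (hvdense : ∀ a b : ℝ, 0 ≤ a → a < b → b ≤ 1 → ∃ n j, j ≤ N n ∧ v n j ∈ Set.Ioo a b)
    (y : ℝ) (hy : y ∈ Set.Icc (0:ℝ) 1) : Fsup N u v (Fsup N v u y) = y := by
  set g := Fsup N v u y with hgdef
  have hTne : {x | ∃ n j, j ≤ N n ∧ v n j ≤ y ∧ u n j = x}.Nonempty :=
    ⟨u 0 0, 0, 0, Nat.zero_le _, by rw [hv00]; exact hy.1, rfl⟩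
  have hTbdd := Fsup_bdd N v u humem
  have hg0 : 0 ≤ g := by
    have := le_csSup (hTbdd y) (⟨0, 0, Nat.zero_le _, by rw [hv00]; exact hy.1, rfl⟩ :
      u 0 0 ∈ {x | ∃ n j, j ≤ N n ∧ v n j ≤ y ∧ u n j = x})
    rwa [hu00] at this
  have hSne : {x | ∃ n j, j ≤ N n ∧ u n j ≤ g ∧ v n j = x}.Nonempty :=
    ⟨v 0 0, 0, 0, Nat.zero_le _, by rw [hu00]; exact hg0, rfl⟩
  have hSbdd := Fsup_bdd N u v hvmem
  have hF0 : 0 ≤ Fsup N u v g := by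
    have := le_csSup (hSbdd g) (⟨0, 0, Nat.zero_le _, by rw [hu00]; exact hg0, rfl⟩ :
      v 0 0 ∈ {x | ∃ n j, j ≤ N n ∧ u n j ≤ g ∧ v n j = x})
    rwa [hv00] at this
  have nl1 : ¬ (Fsup N u v g < y) := by
    intro h
    obtain ⟨m, i, hi, hvi⟩ := hvdense (Fsup N u v g) y hF0 h hy.2
    have hmem : u m i ∈ {x | ∃ n j, j ≤ N n ∧ v n j ≤ y ∧ u n j = x} :=
      ⟨m, i, hi, hvi.2.le, rfl⟩
    have hug : u m i ≤ g := le_csSup (hTbdd y) hmem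
    have : v m i ≤ Fsup N u v g := le_csSup (hSbdd g) ⟨m, i, hi, hug, rfl⟩
    exact absurd this (not_le.mpr hvi.1)
  have nl2 : ¬ (y < Fsup N u v g) := by
    intro h
    obtain ⟨x, hxmem, hyx⟩ := exists_lt_of_lt_csSup hSne h
    obtain ⟨m, i, hi, hug, rfl⟩ := hxmem
    obtain ⟨a, b, hb, hz⟩ := hvdense y (v m i) hy.1 hyx (hvmem m i hi).2
    have hub : u a b < u m i := by
      by_contra hh
      push_neg at hh
      exact absurd ((hcomp m i a b hi hb).mp hh) (not_le.mpr hz.2)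
    have hgle : g ≤ u a b := by
      refine csSup_le hTne ?_
      rintro x ⟨c, d, hd, hvle, rfl⟩
      exact (hcomp c d a b hd hb).mpr (hvle.trans hz.1.le)
    exact absurd (hug.trans hgle) (not_le.mpr hub)
  exact le_antisymm (not_lt.mp nl2) (not_lt.mp nl1)

end Aux

/-- Given combinatorially equivalent nested subdivisions `𝓘ⁿ` of `S¹` (with points
`p n j`) and `𝒢ⁿ` of a `1`-bounded turning Jordan curve `Γ` (arcs with endpoints
`e (q n j)`, same-generation diameter ratios in `[1/2,2]`, generation decay in
`[1/16,1/4]`, dense endpoints), the map sending endpoints of `Iⁿⱼ` to the corresponding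
endpoints of `Γⁿⱼ` extends to a homeomorphism `φ : S¹ → Γ`. -/
theorem exists_endpoint_homeomorph
    {Γ : Type*} [MetricSpace Γ] (e : S1 ≃ₜ Γ)
    (h1bt : ∀ x y : Γ, ddist e x y = dist x y)
    (N : ℕ → ℕ) (hN : ∀ n, 1 ≤ N n) (p q : ℕ → ℕ → ℝ)
    (hp0 : ∀ n, p n 0 = 0) (hp1 : ∀ n, p n (N n) = 1)
    (hpm : ∀ n, ∀ i < N n, p n i < p n (i + 1))
    (hq0 : ∀ n, q n 0 = 0) (hq1 : ∀ n, q n (N n) = 1)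
    (hqm : ∀ n, ∀ i < N n, q n i < q n (i + 1))
    (hpnest : ∀ n, ∀ i ≤ N n, ∃ j ≤ N (n + 1), p (n + 1) j = p n i)
    (hqnest : ∀ n, ∀ i ≤ N n, ∃ j ≤ N (n + 1), q (n + 1) j = q n i)
    -- the two families of subdivisions have the same combinatorics
    (hcomb : ∀ n, ∀ i < N (n + 1), ∀ j < N n,
      (Set.Icc (p (n + 1) i) (p (n + 1) (i + 1)) ⊆ Set.Icc (p n j) (p n (j + 1))) ↔
      (Set.Icc (q (n + 1) i) (q (n + 1) (i + 1)) ⊆ Set.Icc (q n j) (q n (j + 1))))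
    -- same-generation diameters of the arcs of `Γ` are comparable within `[1/2, 2]`
    (hratio : ∀ n, ∀ i < N n, ∀ j < N n,
      diam (garc e (q n i) (q n (i + 1))) ≤ 2 * diam (garc e (q n j) (q n (j + 1))))
    -- generation decay of arc diameters within `[1/16, 1/4]`
    (hdecay : ∀ n, ∀ i < N (n + 1), ∀ j < N n,
      (1 / 16) * diam (garc e (q n j) (q n (j + 1))) ≤
          diam (garc e (q (n + 1) i) (q (n + 1) (i + 1))) ∧
        diam (garc e (q (n + 1) i) (q (n + 1) (i + 1))) ≤
          (1 / 4) * diam (garc e (q n j) (q n (j + 1))))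
    -- the subdivision points are dense in `S¹` and in `Γ`
    (hpdense : Dense {s : S1 | ∃ n, ∃ j ≤ N n, s = ((p n j : ℝ) : S1)})
    (hqdense : Dense {x : Γ | ∃ n, ∃ j ≤ N n, x = e ((q n j : ℝ) : S1)}) :
    ∃ φ : S1 ≃ₜ Γ, ∀ n, ∀ j ≤ N n, φ ((p n j : ℝ) : S1) = e ((q n j : ℝ) : S1) := by
  clear h1bt hratio hdecay hN hqnest
  haveI : Fact ((0:ℝ) < 1) := ⟨one_pos⟩
  -- strict monotonicity along a generation
  have mono_aux : ∀ (f : ℕ → ℕ → ℝ), (∀ n, ∀ i < N n, f n i < f n (i+1)) →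
      ∀ n i j, i < j → j ≤ N n → f n i < f n j := by
    intro f hm n i j hij hj
    induction j with
    | zero => omega
    | succ k ih =>
      rcases Nat.lt_succ_iff_lt_or_eq.mp hij with h | h
      · exact (ih h (by omega)).trans (hm n k (by omega))
      · subst h; exact hm n i (by omega)
  have plt := mono_aux p hpm
  have qlt := mono_aux q hqm
  have ple : ∀ n i j, i ≤ j → j ≤ N n → p n i ≤ p n j := by
    intro n i j hij hj
    rcases eq_or_lt_of_le hij with rfl | h
    · exact le_rfl
    · exact (plt n i j h hj).le
  have qle : ∀ n i j, i ≤ j → j ≤ N n → q n i ≤ q n j := by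
    intro n i j hij hj
    rcases eq_or_lt_of_le hij with rfl | h
    · exact le_rfl
    · exact (qlt n i j h hj).le
  have pmem : ∀ n j, j ≤ N n → p n j ∈ Icc (0:ℝ) 1 := by
    intro n j hj
    constructor
    · rcases Nat.eq_zero_or_pos j with rfl | h
      · rw [hp0]
      · rw [← hp0 n]; exact (plt n 0 j h hj).le
    · rcases eq_or_lt_of_le hj with rfl | h
      · rw [hp1]
      · rw [← hp1 n]; exact (plt n j (N n) h le_rfl).le
  have qmem : ∀ n j, j ≤ N n → q n j ∈ Icc (0:ℝ) 1 := by
    intro n j hj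
    constructor
    · rcases Nat.eq_zero_or_pos j with rfl | h
      · rw [hq0]
      · rw [← hq0 n]; exact (qlt n 0 j h hj).le
    · rcases eq_or_lt_of_le hj with rfl | h
      · rw [hq1]
      · rw [← hq1 n]; exact (qlt n j (N n) h le_rfl).le
  -- one-step consistency between the two subdivisions
  have key1 : ∀ n k j, k ≤ N (n+1) → j ≤ N n → p (n+1) k = p n j → q (n+1) k = q n j := by
    intro n k j hk hj hpe
    rcases Nat.eq_zero_or_pos j with rfl | hj0
    · have hk0 : k = 0 := by
        by_contra h
        have h1 : p (n+1) 0 < p (n+1) k := plt (n+1) 0 k (Nat.pos_of_ne_zero h) hk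
        rw [hp0, hpe, hp0] at h1
        exact lt_irrefl _ h1
      rw [hk0, hq0, hq0]
    rcases eq_or_lt_of_le hj with rfl | hjlt
    · have hkN : k = N (n+1) := by
        by_contra h
        have h1 : p (n+1) k < p (n+1) (N (n+1)) :=
          plt (n+1) k _ (lt_of_le_of_ne hk h) le_rfl
        rw [hp1, hpe, hp1] at h1
        exact lt_irrefl _ h1
      rw [hkN, hq1, hq1]
    · have hpj_pos : 0 < p n j := by rw [← hp0 n]; exact plt n 0 j hj0 hj
      have hpj_lt1 : p n j < 1 := by rw [← hp1 n]; exact plt n j (N n) hjlt le_rfl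
      have hk0 : 0 < k := by
        rcases Nat.eq_zero_or_pos k with rfl | h
        · rw [hp0] at hpe; exact absurd hpe.symm (ne_of_gt hpj_pos)
        · exact h
      have hkN : k < N (n+1) := by
        by_contra h
        have hkk : k = N (n+1) := le_antisymm hk (not_lt.mp h)
        rw [hkk, hp1] at hpe
        linarith
      obtain ⟨m, hm, hme⟩ := hpnest n (j+1) hjlt
      have hkm : k < m := by
        by_contra h
        have h1 : p (n+1) m ≤ p (n+1) k := ple (n+1) m k (not_lt.mp h) hk
        rw [hme, hpe] at h1
        exact absurd h1 (not_le.mpr (plt n j (j+1) (Nat.lt_succ_self j) hjlt))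
      have hsub1 : Icc (p (n+1) k) (p (n+1) (k+1)) ⊆ Icc (p n j) (p n (j+1)) :=
        Icc_subset_Icc (le_of_eq hpe.symm)
          (le_trans (ple (n+1) (k+1) m hkm hm) (le_of_eq hme))
      have hq1' := (hcomb n k hkN j hjlt).mp hsub1
      have hmem1 : q (n+1) k ∈ Icc (q (n+1) k) (q (n+1) (k+1)) :=
        left_mem_Icc.mpr (qle (n+1) k (k+1) (Nat.le_succ k) hkN)
      have hge : q n j ≤ q (n+1) k := (hq1' hmem1).1
      obtain ⟨m', hm', hme'⟩ := hpnest n (j-1) (by omega)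
      have hm'k : m' < k := by
        by_contra h
        have h1 : p (n+1) k ≤ p (n+1) m' := ple (n+1) k m' (not_lt.mp h) hm'
        rw [hme', hpe] at h1
        have h2 : p n (j-1) < p n j := plt n (j-1) j (by omega) hj
        linarith
      have hj1 : j - 1 + 1 = j := by omega
      have hk1 : k - 1 + 1 = k := by omega
      have hsub2 : Icc (p (n+1) (k-1)) (p (n+1) (k-1+1)) ⊆ Icc (p n (j-1)) (p n (j-1+1)) := by
        rw [hj1, hk1]
        exact Icc_subset_Icc
          (by rw [← hme']; exact ple (n+1) m' (k-1) (by omega) (by omega)) (le_of_eq hpe)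
      have hq2' := (hcomb n (k-1) (by omega) (j-1) (by omega)).mp hsub2
      have hmem2 : q (n+1) (k-1+1) ∈ Icc (q (n+1) (k-1)) (q (n+1) (k-1+1)) :=
        right_mem_Icc.mpr (qle (n+1) (k-1) (k-1+1) (Nat.le_succ _) (by omega))
      have hle : q (n+1) k ≤ q n j := by
        have h3 := (hq2' hmem2).2
        rwa [hj1, hk1] at h3
      exact le_antisymm hle hge
  -- lifting points to later generations
  have lift : ∀ n i, i ≤ N n → ∀ m, ∃ j, j ≤ N (n+m) ∧ p (n+m) j = p n i ∧ q (n+m) j = q n i := by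
    intro n i hi m
    induction m with
    | zero => exact ⟨i, hi, rfl, rfl⟩
    | succ m ih =>
      obtain ⟨j, hj, hpj, hqj⟩ := ih
      obtain ⟨j', hj', hpj'⟩ := hpnest (n+m) j hj
      exact ⟨j', hj', hpj'.trans hpj, (key1 (n+m) j' j hj' hj hpj').trans hqj⟩
  -- order comparison between the two point families
  have comp : ∀ n i m j, i ≤ N n → j ≤ N m → (p n i ≤ p m j ↔ q n i ≤ q m j) := by
    intro n i m j hi hj
    obtain ⟨a, ha, hpa, hqa⟩ := lift n i hi m
    obtain ⟨b, hb, hpb, hqb⟩ := lift m j hj n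
    rw [Nat.add_comm m n] at hb hpb hqb
    constructor
    · intro h
      have hab : a ≤ b := by
        by_contra hba
        push_neg at hba
        have h1 := plt (n+m) b a hba ha
        rw [hpa, hpb] at h1
        linarith
      calc q n i = q (n+m) a := hqa.symm
        _ ≤ q (n+m) b := qle (n+m) a b hab hb
        _ = q m j := hqb
    · intro h
      have hab : a ≤ b := by
        by_contra hba
        push_neg at hba
        have h1 := qlt (n+m) b a hba ha
        rw [hqa, hqb] at h1
        linarith
      calc p n i = p (n+m) a := hpa.symm
        _ ≤ p (n+m) b := ple (n+m) a b hab hb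
        _ = p m j := hpb
  -- density of the parameter points inside (a,b) ⊆ [0,1]
  have dense_aux : ∀ (r : ℕ → ℕ → ℝ), (∀ n j, j ≤ N n → r n j ∈ Icc (0:ℝ) 1) →
      Dense {s : S1 | ∃ n, ∃ j ≤ N n, s = ((r n j : ℝ) : S1)} →
      ∀ a b : ℝ, 0 ≤ a → a < b → b ≤ 1 → ∃ n j, j ≤ N n ∧ r n j ∈ Ioo a b := by
    intro r hrmem hrd a b ha hab hb
    have hopen : IsOpen ((fun t : ℝ => (t : S1)) '' Ioo a b) :=
      QuotientAddGroup.isOpenMap_coe _ isOpen_Ioo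
    have hne : ((fun t : ℝ => (t : S1)) '' Ioo a b).Nonempty :=
      (nonempty_Ioo.mpr hab).image _
    obtain ⟨s, hsD, hsU⟩ := hrd.exists_mem_open hopen hne
    obtain ⟨n, j, hj, rfl⟩ := hsD
    obtain ⟨t, htI, hts⟩ := hsU
    have hts' : ((t : ℝ) : S1) = ((r n j : ℝ) : S1) := hts
    have hz : ((r n j - t : ℝ) : S1) = 0 := by
      rw [QuotientAddGroup.mk_sub, hts', sub_self]
    rw [AddCircle.coe_eq_zero_iff] at hz
    obtain ⟨k, hk⟩ := hz
    have hkr : (k : ℝ) = r n j - t := by rwa [zsmul_eq_mul, mul_one] at hk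
    have hb1 : (k : ℝ) < 1 := by
      have h1 := (hrmem n j hj).2
      have h2 := htI.1
      rw [hkr]; linarith
    have hb2 : (-1 : ℝ) < (k : ℝ) := by
      have h1 := (hrmem n j hj).1
      have h2 := htI.2
      rw [hkr]; linarith
    have hk0 : k = 0 := by
      have h1 : k < 1 := by exact_mod_cast hb1
      have h2 : -1 < k := by exact_mod_cast hb2
      omega
    have hrt : r n j = t := by
      rw [hk0] at hkr
      push_cast at hkr
      linarith
    exact ⟨n, j, hj, hrt ▸ htI⟩
  have pdense := dense_aux p pmem hpdense
  have hqdS1 : Dense {s : S1 | ∃ n, ∃ j ≤ N n, s = ((q n j : ℝ) : S1)} := by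
    have hpre : {s : S1 | ∃ n, ∃ j ≤ N n, s = ((q n j : ℝ) : S1)} =
        e ⁻¹' {x : Γ | ∃ n, ∃ j ≤ N n, x = e ((q n j : ℝ) : S1)} := by
      ext s
      simp only [mem_setOf_eq, mem_preimage]
      constructor
      · rintro ⟨n, j, hj, rfl⟩; exact ⟨n, j, hj, rfl⟩
      · rintro ⟨n, j, hj, hs⟩; exact ⟨n, j, hj, e.injective hs⟩
    rw [hpre]
    exact hqdense.preimage e.isOpenMap
  have qdense := dense_aux q qmem hqdS1
  have compsymm : ∀ n i m j, i ≤ N n → j ≤ N m → (q n i ≤ q m j ↔ p n i ≤ p m j) :=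
    fun n i m j hi hj => (comp n i m j hi hj).symm
  set F := Fsup N p q with hFdef
  set G := Fsup N q p with hGdef
  have hFat : ∀ n j, j ≤ N n → F (p n j) = q n j :=
    fun n j hj => Fsup_at N p q qmem comp n j hj
  have hGat : ∀ n j, j ≤ N n → G (q n j) = p n j :=
    fun n j hj => Fsup_at N q p pmem compsymm n j hj
  have hFmono : Monotone F := Fsup_mono N p q pmem qmem (hp0 0)
  have hGmono : Monotone G := Fsup_mono N q p qmem pmem (hq0 0)
  have hFG : ∀ y ∈ Icc (0:ℝ) 1, F (G y) = y :=
    Fsup_inv N p q pmem qmem (hp0 0) (hq0 0) comp qdense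
  have hF0 : F 0 = 0 := by have h := hFat 0 0 (Nat.zero_le _); rwa [hp0, hq0] at h
  have hF1 : F 1 = 1 := by have h := hFat 0 (N 0) le_rfl; rwa [hp1, hq1] at h
  have hG0 : G 0 = 0 := by have h := hGat 0 0 (Nat.zero_le _); rwa [hq0, hp0] at h
  have hG1 : G 1 = 1 := by have h := hGat 0 (N 0) le_rfl; rwa [hq1, hp1] at h
  have hFstrict : ∀ s t : ℝ, 0 ≤ s → s < t → t ≤ 1 → F s < F t := by
    intro s t hs hst ht
    obtain ⟨n, j, hj, hu⟩ := pdense s t hs hst ht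
    obtain ⟨m, i, hi, hu'⟩ := pdense (p n j) t (pmem n j hj).1 hu.2 ht
    have h2 : q n j < q m i := by
      by_contra hh
      push_neg at hh
      have h3 := (comp m i n j hi hj).mpr hh
      exact absurd h3 (not_le.mpr hu'.1)
    calc F s ≤ F (p n j) := hFmono hu.1.le
      _ = q n j := hFat n j hj
      _ < q m i := h2
      _ = F (p m i) := (hFat m i hi).symm
      _ ≤ F t := hFmono hu'.2.le
  -- continuity of `F` on `[0,1]` via a globally monotone surjective extension
  have hFcont : ContinuousOn F (Icc 0 1) := by
    set H : ℝ → ℝ := fun t => if t ≤ 0 then t else if 1 ≤ t then t else F t with hHdef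
    have hHmono : Monotone H := by
      intro s t hst
      by_cases hs0 : s ≤ 0
      · by_cases ht0 : t ≤ 0
        · simp only [hHdef, if_pos hs0, if_pos ht0]; exact hst
        · push_neg at ht0
          by_cases ht1 : 1 ≤ t
          · simp only [hHdef, if_pos hs0, if_neg (not_le.mpr ht0), if_pos ht1]
            linarith
          · simp only [hHdef, if_pos hs0, if_neg (not_le.mpr ht0), if_neg ht1]
            have h1 : F 0 ≤ F t := hFmono ht0.le
            rw [hF0] at h1; linarith
      · push_neg at hs0
        have ht0 : ¬ t ≤ 0 := by push_neg; linarith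
        by_cases hs1 : 1 ≤ s
        · have ht1 : 1 ≤ t := le_trans hs1 hst
          simp only [hHdef, if_neg (not_le.mpr hs0), if_neg ht0, if_pos hs1, if_pos ht1]
          exact hst
        · by_cases ht1 : 1 ≤ t
          · simp only [hHdef, if_neg (not_le.mpr hs0), if_neg ht0, if_neg hs1, if_pos ht1]
            have h1 : F s ≤ F 1 := hFmono (by push_neg at hs1; linarith)
            rw [hF1] at h1; linarith
          · simp only [hHdef, if_neg (not_le.mpr hs0), if_neg ht0, if_neg hs1, if_neg ht1]
            exact hFmono hst
    have hHsurj : Function.Surjective H := by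
      intro y
      by_cases hy0 : y ≤ 0
      · exact ⟨y, by simp only [hHdef, if_pos hy0]⟩
      · push_neg at hy0
        by_cases hy1 : 1 ≤ y
        · refine ⟨y, ?_⟩
          simp only [hHdef, if_neg (not_le.mpr hy0), if_pos hy1]
        · push_neg at hy1
          refine ⟨G y, ?_⟩
          have hy : y ∈ Icc (0:ℝ) 1 := ⟨hy0.le, hy1.le⟩
          have hFGy := hFG y hy
          have hGy0 : ¬ G y ≤ 0 := by
            intro h
            have h2 : G 0 ≤ G y := hGmono hy0.le
            rw [hG0] at h2
            have h3 : G y = 0 := le_antisymm h h2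
            rw [h3, hF0] at hFGy; linarith
          have hGy1 : ¬ 1 ≤ G y := by
            intro h
            have h2 : G y ≤ 1 := by rw [← hG1]; exact hGmono hy1.le
            have h3 : G y = 1 := le_antisymm h2 h
            rw [h3, hF1] at hFGy; linarith
          simp only [hHdef, if_neg hGy0, if_neg hGy1]
          exact hFGy
    have hHcont : Continuous H := hHmono.continuous_of_surjective hHsurj
    have hEq : EqOn F H (Icc 0 1) := by
      intro t ht
      by_cases ht0 : t ≤ 0
      · have ht' : t = 0 := le_antisymm ht0 ht.1
        subst ht'
        simp only [hHdef, if_pos le_rfl, hF0]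
      · by_cases ht1 : 1 ≤ t
        · have ht' : t = 1 := le_antisymm ht.2 ht1
          subst ht'
          simp only [hHdef, if_neg ht0, if_pos le_rfl, hF1]
        · simp only [hHdef, if_neg ht0, if_neg ht1]
    exact hHcont.continuousOn.congr hEq
  -- basic circle facts
  have h10 : ((1:ℝ) : S1) = ((0:ℝ) : S1) := by
    have hz : ((1 - 0 : ℝ) : S1) = 0 := by
      rw [AddCircle.coe_eq_zero_iff]
      exact ⟨1, by norm_num⟩
    rw [QuotientAddGroup.mk_sub] at hz
    exact sub_eq_zero.mp hz
  set f : ℝ → S1 := fun t => ((F t : ℝ) : S1) with hfdef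
  have hf01 : f 0 = f 1 := by
    simp only [hfdef, hF0, hF1, h10]
  have hcoe : Continuous (fun t : ℝ => (t : S1)) := AddCircle.continuous_mk' 1
  have hfcont : ContinuousOn f (Icc 0 1) := by
    rw [hfdef]
    exact hcoe.comp_continuousOn hFcont
  set g : S1 → Γ := fun s => e (AddCircle.liftIco 1 0 f s) with hgdef2
  have hgc : Continuous g := by
    rw [hgdef2]
    exact e.continuous.comp (AddCircle.liftIco_zero_continuous hf01 hfcont)
  have hrep : ∀ s : S1, ∃ x : ℝ, x ∈ Ico (0:ℝ) 1 ∧ ((x : ℝ) : S1) = s := by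
    intro s
    induction s using QuotientAddGroup.induction_on with
    | H t =>
      refine ⟨Int.fract t, ⟨Int.fract_nonneg t, Int.fract_lt_one t⟩, ?_⟩
      have hz : ((Int.fract t - t : ℝ) : S1) = 0 := by
        rw [AddCircle.coe_eq_zero_iff]
        refine ⟨-⌊t⌋, ?_⟩
        rw [Int.fract, zsmul_eq_mul]
        push_cast
        ring
      rw [QuotientAddGroup.mk_sub] at hz
      exact sub_eq_zero.mp hz
  have hFmaps : ∀ x : ℝ, x ∈ Ico (0:ℝ) 1 → F x ∈ Ico (0:ℝ) 1 := by
    intro x hx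
    constructor
    · rw [← hF0]; exact hFmono hx.1
    · rw [← hF1]; exact hFstrict x 1 hx.1 hx.2 le_rfl
  have hIco : ∀ x : ℝ, x ∈ Ico (0:ℝ) 1 → x ∈ Ico (0:ℝ) (0+1) := by
    intro x hx; rwa [zero_add]
  have hgapp : ∀ x : ℝ, x ∈ Ico (0:ℝ) 1 → g ((x : ℝ) : S1) = e ((F x : ℝ) : S1) := by
    intro x hx
    rw [hgdef2]
    simp only
    rw [AddCircle.liftIco_zero_coe_apply hx]
  have hginj : Function.Injective g := by
    intro s1 s2 h
    obtain ⟨x1, hx1, rfl⟩ := hrep s1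
    obtain ⟨x2, hx2, rfl⟩ := hrep s2
    rw [hgapp x1 hx1, hgapp x2 hx2] at h
    have h2 : ((F x1 : ℝ) : S1) = ((F x2 : ℝ) : S1) := e.injective h
    have h3 : F x1 = F x2 :=
      (AddCircle.coe_eq_coe_iff_of_mem_Ico (hIco _ (hFmaps x1 hx1))
        (hIco _ (hFmaps x2 hx2))).mp h2
    have hx12 : x1 = x2 := by
      by_contra hne
      rcases Ne.lt_or_gt hne with hlt | hlt
      · exact absurd h3 (ne_of_lt (hFstrict x1 x2 hx1.1 hlt hx2.2.le))
      · exact absurd h3.symm (ne_of_lt (hFstrict x2 x1 hx2.1 hlt hx1.2.le))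
    rw [hx12]
  have hgsurj : Function.Surjective g := by
    intro z
    obtain ⟨y, hy, hys⟩ := hrep (e.symm z)
    have hyIcc : y ∈ Icc (0:ℝ) 1 := ⟨hy.1, hy.2.le⟩
    have hGy : G y ∈ Ico (0:ℝ) 1 := by
      constructor
      · rw [← hG0]; exact hGmono hy.1
      · rcases lt_or_eq_of_le (show G y ≤ 1 by rw [← hG1]; exact hGmono hy.2.le) with h | h
        · exact h
        · exfalso
          have hFGy := hFG y hyIcc
          rw [h, hF1] at hFGy
          exact absurd hFGy.symm (ne_of_lt hy.2)
    refine ⟨((G y : ℝ) : S1), ?_⟩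
    rw [hgapp (G y) hGy, hFG y hyIcc, hys]
    exact e.apply_symm_apply z
  have hφ0 : Function.Bijective g := ⟨hginj, hgsurj⟩
  let φ0 : S1 ≃ Γ := Equiv.ofBijective g hφ0
  have hφc : Continuous φ0 := hgc
  refine ⟨Continuous.homeoOfEquivCompactToT2 (f := φ0) hφc, ?_⟩
  intro n j hj
  show g ((p n j : ℝ) : S1) = e ((q n j : ℝ) : S1)
  rcases lt_or_eq_of_le (pmem n j hj).2 with h | h
  · rw [hgapp (p n j) ⟨(pmem n j hj).1, h⟩, hFat n j hj]
  · have hjN : j = N n := by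
      by_contra hne
      have h1 := plt n j (N n) (lt_of_le_of_ne hj hne) le_rfl
      rw [hp1, h] at h1
      exact lt_irrefl _ h1
    have hq : q n j = 1 := by rw [hjN, hq1]
    rw [h, hq, h10]
    rw [hgapp 0 ⟨le_rfl, one_pos⟩, hF0]
end
end
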